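/- arXiv:1703.05855 — 11 statements merged into one kernel-verified Lean document; each statement's English description precedes it below -/
import Mathlib

section
/- Let φ : ℝ² → ℝ be twice continuously differentiable. For λ ∈ ℂ, λ ≠ 0, define the 3×3 matrix-valued functions U(ξ,η,λ) = −2(∂φ/∂ξ)(ξ,η)·H0 + iλ·𝒥 and W(ξ,η,λ) = i λ^{−1} V1(ξ,η), where V1(ξ,η) is the matrix with entries V1(1,3) = e^{−4φ(ξ,η)}, V1(2,1) = V1(3,2) = e^{2φ(ξ,η)}, and all other entries zero. Then the zero-curvature (compatibility) condition ∂U/∂η − ∂W/∂ξ + [U, W] = 0 holds for all (ξ,η) ∈ ℝ² and all λ ≠ 0 if and only if φ satisfies the Tzitzeica equation T2: 2 ∂²φ/∂ξ∂η = −(e^{2φ} − e^{−4φ}). (In fact, the λ-dependent terms cancel identically and the condition reduces pointwise to −2(∂²φ/∂ξ∂η)·H0 = (e^{2φ} − e^{−4φ})·H0.) -/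
open Matrix

/-- `H₀ = diag(1, 0, -1)`. -/
def H0 : Matrix (Fin 3) (Fin 3) ℂ := !![1, 0, 0; 0, 0, 0; 0, 0, -1]

/-- The cyclic matrix `𝒥` with `𝒥(1,2) = 𝒥(2,3) = 𝒥(3,1) = 1`. -/
def Jmat : Matrix (Fin 3) (Fin 3) ℂ := !![0, 1, 0; 0, 0, 1; 1, 0, 0]

/-- `V₁(ξ,η)`: the matrix with `V₁(1,3) = e^{-4φ}`, `V₁(2,1) = V₁(3,2) = e^{2φ}`. -/
noncomputable def V1 (φ : ℝ → ℝ → ℝ) (ξ η : ℝ) : Matrix (Fin 3) (Fin 3) ℂ :=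
  !![0, 0, Real.exp (-4 * φ ξ η);
     Real.exp (2 * φ ξ η), 0, 0;
     0, Real.exp (2 * φ ξ η), 0]

/-- `U(ξ,η,λ) = -2 φ_ξ · H₀ + iλ·𝒥`. -/
noncomputable def Umat (φ : ℝ → ℝ → ℝ) (ξ η : ℝ) (lam : ℂ) : Matrix (Fin 3) (Fin 3) ℂ :=
  ((-2 * deriv (fun x => φ x η) ξ : ℝ) : ℂ) • H0 + (Complex.I * lam) • Jmat

/-- `W(ξ,η,λ) = i λ⁻¹ V₁(ξ,η)`. -/
noncomputable def Wmat (φ : ℝ → ℝ → ℝ) (ξ η : ℝ) (lam : ℂ) : Matrix (Fin 3) (Fin 3) ℂ :=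
  (Complex.I * lam⁻¹) • V1 φ ξ η

lemma slice1 {φ : ℝ → ℝ → ℝ} (hφ : ContDiff ℝ 2 (Function.uncurry φ)) (x y : ℝ) :
    HasDerivAt (fun x' => φ x' y) (fderiv ℝ (Function.uncurry φ) (x, y) (1, 0)) x := by
  have hF : HasFDerivAt (Function.uncurry φ) (fderiv ℝ (Function.uncurry φ) (x, y)) (x, y) :=
    (hφ.differentiable (by norm_num) (x, y)).hasFDerivAt
  exact hF.comp_hasDerivAt x ((hasDerivAt_id x).prodMk (hasDerivAt_const x y))

lemma slice2 {φ : ℝ → ℝ → ℝ} (hφ : ContDiff ℝ 2 (Function.uncurry φ)) (x y : ℝ) :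
    HasDerivAt (fun y' => φ x y') (fderiv ℝ (Function.uncurry φ) (x, y) (0, 1)) y := by
  have hF : HasFDerivAt (Function.uncurry φ) (fderiv ℝ (Function.uncurry φ) (x, y)) (x, y) :=
    (hφ.differentiable (by norm_num) (x, y)).hasFDerivAt
  exact hF.comp_hasDerivAt y ((hasDerivAt_const y x).prodMk (hasDerivAt_id y))

/-- fderiv of `p ↦ fderiv F p v`, along a line. -/
lemma applied_line {φ : ℝ → ℝ → ℝ} (hφ : ContDiff ℝ 2 (Function.uncurry φ))
    (p : ℝ × ℝ) (v w : ℝ × ℝ) (line : ℝ → ℝ × ℝ) (t : ℝ) (hline : HasDerivAt line w t)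
    (hpt : line t = p) :
    HasDerivAt (fun s => fderiv ℝ (Function.uncurry φ) (line s) v)
      (fderiv ℝ (fderiv ℝ (Function.uncurry φ)) p w v) t := by
  have hD : DifferentiableAt ℝ (fderiv ℝ (Function.uncurry φ)) p := by
    have := (hφ.fderiv_right (m := 1) le_rfl).differentiable one_ne_zero
    exact this p
  have hF2 : HasFDerivAt (fderiv ℝ (Function.uncurry φ))
      (fderiv ℝ (fderiv ℝ (Function.uncurry φ)) p) p := hD.hasFDerivAt
  have h1 : HasDerivAt (fun s => fderiv ℝ (Function.uncurry φ) (line s))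
      (fderiv ℝ (fderiv ℝ (Function.uncurry φ)) p w) t := by
    rw [← hpt] at hF2
    have h3 := hF2.comp_hasDerivAt t hline
    rw [hpt] at h3
    exact h3
  have h2 := h1.clm_apply (hasDerivAt_const t v)
  simpa using h2

/-- The mixed partial derivative, with Schwarz symmetry built in. -/
lemma mixed {φ : ℝ → ℝ → ℝ} (hφ : ContDiff ℝ 2 (Function.uncurry φ)) (ξ η : ℝ) :
    HasDerivAt (fun y => deriv (fun x => φ x y) ξ)
      (deriv (fun x => deriv (fun y => φ x y) η) ξ) η := by
  have hsym := (hφ.contDiffAt (x := (ξ, η))).isSymmSndFDerivAt (by simp)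
  have hmix1 : HasDerivAt (fun y => deriv (fun x => φ x y) ξ)
      (fderiv ℝ (fderiv ℝ (Function.uncurry φ)) (ξ, η) (0, 1) (1, 0)) η := by
    have h := applied_line hφ (ξ, η) (1, 0) (0, 1) (fun t => (ξ, t)) η
      ((hasDerivAt_const η ξ).prodMk (hasDerivAt_id η)) rfl
    apply h.congr_of_eventuallyEq
    filter_upwards with y
    exact ((slice1 hφ ξ y).deriv)
  have hmix2 : deriv (fun x => deriv (fun y => φ x y) η) ξ
      = fderiv ℝ (fderiv ℝ (Function.uncurry φ)) (ξ, η) (1, 0) (0, 1) := by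
    have h := applied_line hφ (ξ, η) (0, 1) (1, 0) (fun t => (t, η)) ξ
      ((hasDerivAt_id ξ).prodMk (hasDerivAt_const ξ η)) rfl
    have h' : HasDerivAt (fun x => deriv (fun y => φ x y) η)
        (fderiv ℝ (fderiv ℝ (Function.uncurry φ)) (ξ, η) (1, 0) (0, 1)) ξ := by
      apply h.congr_of_eventuallyEq
      filter_upwards with x
      exact ((slice2 hφ x η).deriv)
    exact h'.deriv
  rw [hmix2, hsym (1, 0) (0, 1)]
  exact hmix1

/-- The curvature identity: the zero-curvature expression equals a multiple of `H0`. -/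
lemma curv {φ : ℝ → ℝ → ℝ} (hφ : ContDiff ℝ 2 (Function.uncurry φ)) (ξ η : ℝ)
    (lam : ℂ) (hl : lam ≠ 0) :
    (Matrix.of fun i j => deriv (fun y => Umat φ ξ y lam i j) η) -
        (Matrix.of fun i j => deriv (fun x => Wmat φ x η lam i j) ξ) +
        (Umat φ ξ η lam * Wmat φ ξ η lam - Wmat φ ξ η lam * Umat φ ξ η lam) =
      ((-(2 * deriv (fun x => deriv (fun y => φ x y) η) ξ +
          (Real.exp (2 * φ ξ η) - Real.exp (-4 * φ ξ η))) : ℝ) : ℂ) • H0 := by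
  have hm := mixed hφ ξ η
  have hc : HasDerivAt (fun x => φ x η) (deriv (fun x => φ x η) ξ) ξ := by
    have h := slice1 hφ ξ η; rw [h.deriv]; exact h
  have hU : ∀ i j, deriv (fun y => Umat φ ξ y lam i j) η =
      ((-2 * deriv (fun x => deriv (fun y => φ x y) η) ξ : ℝ) : ℂ) * H0 i j := by
    intro i j
    have h := (((hm.const_mul (-2:ℝ)).ofReal_comp).mul_const (H0 i j)).add_const
      ((Complex.I * lam) * Jmat i j)
    have he : (fun y => Umat φ ξ y lam i j) =
        fun y => ((-2 * deriv (fun x => φ x y) ξ : ℝ) : ℂ) * H0 i j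
          + (Complex.I * lam) * Jmat i j := by
      funext y; simp [Umat, Matrix.add_apply, Matrix.smul_apply, smul_eq_mul]
    rw [he]
    exact h.deriv
  have hb : HasDerivAt (fun x => ((Real.exp (2 * φ x η) : ℝ) : ℂ))
      ((Real.exp (2 * φ ξ η) * (2 * deriv (fun x => φ x η) ξ) : ℝ) : ℂ) ξ :=
    ((hc.const_mul (2:ℝ)).exp).ofReal_comp
  have ha : HasDerivAt (fun x => ((Real.exp (-4 * φ x η) : ℝ) : ℂ))
      ((Real.exp (-4 * φ ξ η) * (-4 * deriv (fun x => φ x η) ξ) : ℝ) : ℂ) ξ :=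
    ((hc.const_mul (-4:ℝ)).exp).ofReal_comp
  have hW : ∀ i j, deriv (fun x => Wmat φ x η lam i j) ξ =
      (Complex.I * lam⁻¹) *
        (!![0, 0, ((Real.exp (-4 * φ ξ η) * (-4 * deriv (fun x => φ x η) ξ) : ℝ) : ℂ);
            ((Real.exp (2 * φ ξ η) * (2 * deriv (fun x => φ x η) ξ) : ℝ) : ℂ), 0, 0;
            0, ((Real.exp (2 * φ ξ η) * (2 * deriv (fun x => φ x η) ξ) : ℝ) : ℂ), 0] i j) := by
    intro i j
    fin_cases i <;> fin_cases j <;>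
      simp only [Wmat, V1, Matrix.smul_apply, smul_eq_mul, Matrix.cons_val', Matrix.cons_val_zero,
        Matrix.cons_val_one, Matrix.head_cons, Matrix.empty_val', Matrix.cons_val_fin_one,
        Matrix.head_fin_const, Matrix.tail_cons, Fin.isValue, Fin.mk_one, Matrix.cons_val_two,
        Matrix.of_apply, Fin.zero_eta, Fin.mk_zero] <;>
      first
        | exact (hb.const_mul (Complex.I * lam⁻¹)).deriv
        | exact (ha.const_mul (Complex.I * lam⁻¹)).deriv
        | simp [-Complex.ofReal_exp, Matrix.vecHead, Matrix.vecTail]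
  have hK : Complex.I ^ 2 * lam * lam⁻¹ = -1 := by
    rw [Complex.I_sq]; field_simp
  have hIl : (Complex.I * lam) * (Complex.I * lam⁻¹) = -1 := by
    rw [show (Complex.I * lam) * (Complex.I * lam⁻¹) = Complex.I ^ 2 * lam * lam⁻¹ by ring, hK]
  ext i j
  fin_cases i <;> fin_cases j <;>
    (rw [Matrix.add_apply, Matrix.sub_apply, Matrix.sub_apply, Matrix.of_apply, Matrix.of_apply,
        hU, hW]) <;>
    simp [Matrix.mul_apply, Fin.sum_univ_three, Umat, Wmat, V1, H0, Jmat, Matrix.vecHead, Matrix.vecTail] <;>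
    push_cast <;>
    first
      | ring1
      | linear_combination
          (Complex.exp (2 * ((φ ξ η : ℝ) : ℂ)) - Complex.exp (-(4 * ((φ ξ η : ℝ) : ℂ)))) * hIl
      | linear_combination
          (Complex.exp (-(4 * ((φ ξ η : ℝ) : ℂ))) - Complex.exp (2 * ((φ ξ η : ℝ) : ℂ))) * hIl




/-- The zero-curvature condition `∂U/∂η - ∂W/∂ξ + [U,W] = 0` holds for all
`(ξ,η)` and all `λ ≠ 0` iff `φ` satisfies the Tzitzeica equation T2:
`2 φ_{ξη} = -(e^{2φ} - e^{-4φ})`. -/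
theorem stmt_4 (φ : ℝ → ℝ → ℝ) (hφ : ContDiff ℝ 2 (Function.uncurry φ)) :
    (∀ (ξ η : ℝ) (lam : ℂ), lam ≠ 0 →
      (Matrix.of fun i j => deriv (fun y => Umat φ ξ y lam i j) η) -
        (Matrix.of fun i j => deriv (fun x => Wmat φ x η lam i j) ξ) +
        (Umat φ ξ η lam * Wmat φ ξ η lam - Wmat φ ξ η lam * Umat φ ξ η lam) = 0)
    ↔
    (∀ ξ η : ℝ,
      2 * deriv (fun x => deriv (fun y => φ x y) η) ξ =
        -(Real.exp (2 * φ ξ η) - Real.exp (-4 * φ ξ η))) := by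
  constructor
  · intro h ξ η
    have h1 := h ξ η 1 one_ne_zero
    rw [curv hφ ξ η 1 one_ne_zero] at h1
    have h0 := congrFun (congrFun h1 0) 0
    simp only [Matrix.smul_apply, smul_eq_mul, Matrix.zero_apply, H0, Matrix.of_apply, Matrix.cons_val',
      Matrix.cons_val_zero, Matrix.empty_val', Matrix.cons_val_fin_one, mul_one,
      Complex.ofReal_eq_zero] at h0
    linarith
  · intro hT ξ η lam hl
    rw [curv hφ ξ η lam hl]
    have h0 : (-(2 * deriv (fun x => deriv (fun y => φ x y) η) ξ +
        (Real.exp (2 * φ ξ η) - Real.exp (-4 * φ ξ η))) : ℝ) = 0 := by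
      have := hT ξ η; linarith
    rw [h0]
    simp
end

section
/- Let ρ ≠ 0, μ₀₂, c, α be real numbers, and define X(ξ,η) = (1/2)(ρξ − η/ρ) and Ω(ξ,η) = (√3/2)(ρξ + η/ρ). Define m₁(ξ,η) = μ₀₂e^{2X} + 2c·e^{−X}·cos(Ω − α + 2π/3), m₂(ξ,η) = μ₀₂e^{2X} + 2c·e^{−X}·cos(Ω − α), m₃(ξ,η) = μ₀₂e^{2X} + 2c·e^{−X}·cos(Ω − α − 2π/3). Then (m₁, m₂, m₃) satisfies the linear system ∂m₁/∂ξ = ρm₃, ∂m₂/∂ξ = ρm₁, ∂m₃/∂ξ = ρm₂, and ∂m₁/∂η = −ρ^{−1}m₂, ∂m₂/∂η = −ρ^{−1}m₃, ∂m₃/∂η = −ρ^{−1}m₁. -/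
lemma gen_hd (A B : ℝ) {u v : ℝ → ℝ} {u' v' x : ℝ}
    (hu : HasDerivAt u u' x) (hv : HasDerivAt v v' x) :
    HasDerivAt (fun t => A * Real.exp (2 * u t) + B * Real.exp (-u t) * Real.cos (v t))
      (2 * A * u' * Real.exp (2 * u x)
        - B * u' * Real.exp (-u x) * Real.cos (v x)
        - B * v' * Real.exp (-u x) * Real.sin (v x)) x := by
  have h := (((hu.const_mul 2).exp).const_mul A).add
      ((((hu.neg).exp).const_mul B).mul (hv.cos))
  convert h using 1
  · rfl
  · rfl
  · rfl
  · simp only [Pi.neg_apply]; ring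

/-- Explicit components of the row vector `⟨mᵀ(ξ,η)|` for a first-type one-soliton
(eigenvalue `λ₁ = iρ`) satisfy the linear system
`∂m₁/∂ξ = ρm₃, ∂m₂/∂ξ = ρm₁, ∂m₃/∂ξ = ρm₂` and
`∂m₁/∂η = -ρ⁻¹m₂, ∂m₂/∂η = -ρ⁻¹m₃, ∂m₃/∂η = -ρ⁻¹m₁`. -/
theorem stmt_10 (ρ μ₀₂ c α : ℝ) (hρ : ρ ≠ 0)
    (X Ω : ℝ → ℝ → ℝ)
    (hX : ∀ ξ η : ℝ, X ξ η = (1 / 2) * (ρ * ξ - η / ρ))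
    (hΩ : ∀ ξ η : ℝ, Ω ξ η = (Real.sqrt 3 / 2) * (ρ * ξ + η / ρ))
    (m₁ m₂ m₃ : ℝ → ℝ → ℝ)
    (hm₁ : ∀ ξ η : ℝ, m₁ ξ η =
      μ₀₂ * Real.exp (2 * X ξ η) +
        2 * c * Real.exp (-X ξ η) * Real.cos (Ω ξ η - α + 2 * Real.pi / 3))
    (hm₂ : ∀ ξ η : ℝ, m₂ ξ η =
      μ₀₂ * Real.exp (2 * X ξ η) +
        2 * c * Real.exp (-X ξ η) * Real.cos (Ω ξ η - α))
    (hm₃ : ∀ ξ η : ℝ, m₃ ξ η =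
      μ₀₂ * Real.exp (2 * X ξ η) +
        2 * c * Real.exp (-X ξ η) * Real.cos (Ω ξ η - α - 2 * Real.pi / 3)) :
    ∀ ξ η : ℝ,
      deriv (fun x => m₁ x η) ξ = ρ * m₃ ξ η ∧
      deriv (fun x => m₂ x η) ξ = ρ * m₁ ξ η ∧
      deriv (fun x => m₃ x η) ξ = ρ * m₂ ξ η ∧
      deriv (fun y => m₁ ξ y) η = -ρ⁻¹ * m₂ ξ η ∧
      deriv (fun y => m₂ ξ y) η = -ρ⁻¹ * m₃ ξ η ∧
      deriv (fun y => m₃ ξ y) η = -ρ⁻¹ * m₁ ξ η := by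
  intro ξ η
  have hc : Real.cos (2 * Real.pi / 3) = -(1/2) := by
    rw [show (2 * Real.pi / 3) = Real.pi - Real.pi / 3 by ring, Real.cos_pi_sub,
      Real.cos_pi_div_three]
  have hs : Real.sin (2 * Real.pi / 3) = Real.sqrt 3 / 2 := by
    rw [show (2 * Real.pi / 3) = Real.pi - Real.pi / 3 by ring, Real.sin_pi_sub,
      Real.sin_pi_div_three]
  have h3 : Real.sqrt 3 ^ 2 = 3 := Real.sq_sqrt (by norm_num)
  -- derivatives of the exponents in ξ
  have hu : HasDerivAt (fun x : ℝ => 1 / 2 * (ρ * x - η / ρ)) (1 / 2 * ρ) ξ := by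
    have := (((hasDerivAt_id ξ).const_mul ρ).sub_const (η / ρ)).const_mul ((1:ℝ) / 2)
    simpa using this
  have hv : HasDerivAt (fun x : ℝ => Real.sqrt 3 / 2 * (ρ * x + η / ρ))
      (Real.sqrt 3 / 2 * ρ) ξ := by
    have := (((hasDerivAt_id ξ).const_mul ρ).add_const (η / ρ)).const_mul (Real.sqrt 3 / 2)
    simpa using this
  -- derivatives of the exponents in η
  have hu' : HasDerivAt (fun y : ℝ => 1 / 2 * (ρ * ξ - y / ρ)) (1 / 2 * -(1 / ρ)) η := by
    have := (((hasDerivAt_id η).div_const ρ).const_sub (ρ * ξ)).const_mul ((1:ℝ) / 2)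
    simpa using this
  have hv' : HasDerivAt (fun y : ℝ => Real.sqrt 3 / 2 * (ρ * ξ + y / ρ))
      (Real.sqrt 3 / 2 * (1 / ρ)) η := by
    have := (((hasDerivAt_id η).div_const ρ).const_add (ρ * ξ)).const_mul (Real.sqrt 3 / 2)
    simpa using this
  refine ⟨?_, ?_, ?_, ?_, ?_, ?_⟩
  · have hd := gen_hd μ₀₂ (2 * c) hu ((hv.sub_const α).add_const (2 * Real.pi / 3))
    have e : (fun x => m₁ x η) = (fun x => μ₀₂ * Real.exp (2 * (1 / 2 * (ρ * x - η / ρ))) +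
        2 * c * Real.exp (-(1 / 2 * (ρ * x - η / ρ))) *
          Real.cos (Real.sqrt 3 / 2 * (ρ * x + η / ρ) - α + 2 * Real.pi / 3)) := by
      funext x; rw [hm₁, hX, hΩ]
    rw [e, hd.deriv, hm₃, hX, hΩ]
    simp only [Real.cos_add, Real.sin_add, Real.cos_sub, Real.sin_sub, hc, hs]
    ring_nf
    try rw [h3]
    try ring
  · have hd := gen_hd μ₀₂ (2 * c) hu (hv.sub_const α)
    have e : (fun x => m₂ x η) = (fun x => μ₀₂ * Real.exp (2 * (1 / 2 * (ρ * x - η / ρ))) +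
        2 * c * Real.exp (-(1 / 2 * (ρ * x - η / ρ))) *
          Real.cos (Real.sqrt 3 / 2 * (ρ * x + η / ρ) - α)) := by
      funext x; rw [hm₂, hX, hΩ]
    rw [e, hd.deriv, hm₁, hX, hΩ]
    simp only [Real.cos_add, Real.sin_add, Real.cos_sub, Real.sin_sub, hc, hs]
    ring_nf
    try rw [h3]
    try ring
  · have hd := gen_hd μ₀₂ (2 * c) hu ((hv.sub_const α).sub_const (2 * Real.pi / 3))
    have e : (fun x => m₃ x η) = (fun x => μ₀₂ * Real.exp (2 * (1 / 2 * (ρ * x - η / ρ))) +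
        2 * c * Real.exp (-(1 / 2 * (ρ * x - η / ρ))) *
          Real.cos (Real.sqrt 3 / 2 * (ρ * x + η / ρ) - α - 2 * Real.pi / 3)) := by
      funext x; rw [hm₃, hX, hΩ]
    rw [e, hd.deriv, hm₂, hX, hΩ]
    simp only [Real.cos_add, Real.sin_add, Real.cos_sub, Real.sin_sub, hc, hs]
    ring_nf
    try rw [h3]
    try ring
  · have hd := gen_hd μ₀₂ (2 * c) hu' ((hv'.sub_const α).add_const (2 * Real.pi / 3))
    have e : (fun y => m₁ ξ y) = (fun y => μ₀₂ * Real.exp (2 * (1 / 2 * (ρ * ξ - y / ρ))) +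
        2 * c * Real.exp (-(1 / 2 * (ρ * ξ - y / ρ))) *
          Real.cos (Real.sqrt 3 / 2 * (ρ * ξ + y / ρ) - α + 2 * Real.pi / 3)) := by
      funext y; rw [hm₁, hX, hΩ]
    rw [e, hd.deriv, hm₂, hX, hΩ]
    simp only [Real.cos_add, Real.sin_add, Real.cos_sub, Real.sin_sub, hc, hs]
    ring_nf
    try rw [h3]
    try ring
  · have hd := gen_hd μ₀₂ (2 * c) hu' (hv'.sub_const α)
    have e : (fun y => m₂ ξ y) = (fun y => μ₀₂ * Real.exp (2 * (1 / 2 * (ρ * ξ - y / ρ))) +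
        2 * c * Real.exp (-(1 / 2 * (ρ * ξ - y / ρ))) *
          Real.cos (Real.sqrt 3 / 2 * (ρ * ξ + y / ρ) - α)) := by
      funext y; rw [hm₂, hX, hΩ]
    rw [e, hd.deriv, hm₃, hX, hΩ]
    simp only [Real.cos_add, Real.sin_add, Real.cos_sub, Real.sin_sub, hc, hs]
    ring_nf
    try rw [h3]
    try ring
  · have hd := gen_hd μ₀₂ (2 * c) hu' ((hv'.sub_const α).sub_const (2 * Real.pi / 3))
    have e : (fun y => m₃ ξ y) = (fun y => μ₀₂ * Real.exp (2 * (1 / 2 * (ρ * ξ - y / ρ))) +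
        2 * c * Real.exp (-(1 / 2 * (ρ * ξ - y / ρ))) *
          Real.cos (Real.sqrt 3 / 2 * (ρ * ξ + y / ρ) - α - 2 * Real.pi / 3)) := by
      funext y; rw [hm₃, hX, hΩ]
    rw [e, hd.deriv, hm₁, hX, hΩ]
    simp only [Real.cos_add, Real.sin_add, Real.cos_sub, Real.sin_sub, hc, hs]
    ring_nf
    try rw [h3]
    try ring
end

section
/- Let ρ be a nonzero real number and let m₁, m₂, m₃ : ℝ² → ℝ be twice continuously differentiable functions satisfying the linear system ∂m₁/∂ξ = ρm₃, ∂m₂/∂ξ = ρm₁, ∂m₃/∂ξ = ρm₂, ∂m₁/∂η = −ρ^{−1}m₂, ∂m₂/∂η = −ρ^{−1}m₃, ∂m₃/∂η = −ρ^{−1}m₁. Then on the open set where m₂ ≠ 0, the function u := (2m₁m₃ − m₂²)/m₂² satisfies u·∂²u/∂ξ∂η − (∂u/∂ξ)(∂u/∂η) + u³ − 1 = 0. Consequently, wherever u > 0, the function φ = (1/2)·ln u satisfies the Tzitzeica equation T2: 2 ∂²φ/∂ξ∂η = −(e^{2φ} − e^{−4φ}). -/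
/-- Partial derivative in the first variable. -/
noncomputable def pdXi (f : ℝ → ℝ → ℝ) (ξ η : ℝ) : ℝ := deriv (fun x => f x η) ξ

/-- Partial derivative in the second variable. -/
noncomputable def pdEta (f : ℝ → ℝ → ℝ) (ξ η : ℝ) : ℝ := deriv (fun y => f ξ y) η

/-- The mixed second partial derivative ∂²f/∂ξ∂η (first in η, then in ξ). -/
noncomputable def mixedDeriv (f : ℝ → ℝ → ℝ) (ξ η : ℝ) : ℝ :=
  deriv (fun x => deriv (fun y => f x y) η) ξ

/-- Auxiliary: the closed form of `∂u/∂η` as a function of `ξ` (for fixed `η`). -/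
noncomputable def EyF (ρ : ℝ) (m₁ m₂ m₃ : ℝ → ℝ → ℝ) (η : ℝ) : ℝ → ℝ :=
  fun x => (-2 * ρ⁻¹) *
    ((m₂ x η) ^ 2 * (m₃ x η) + (m₁ x η) ^ 2 * (m₂ x η) - 2 * (m₁ x η) * (m₃ x η) ^ 2) /
    (m₂ x η) ^ 3

/-- Auxiliary: a slice of a `C²` function of two variables has a derivative in the
first variable, equal to the partial derivative `pdXi`. -/
lemma slice_hasDerivAt_xi {f : ℝ → ℝ → ℝ} (hf : ContDiff ℝ 2 (Function.uncurry f))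
    (ξ η : ℝ) : HasDerivAt (fun x => f x η) (pdXi f ξ η) ξ := by
  have hp : DifferentiableAt ℝ (fun x : ℝ => (x, η)) ξ :=
    differentiableAt_id.prodMk (differentiableAt_const η)
  have hd' : DifferentiableAt ℝ (Function.uncurry f ∘ fun x : ℝ => (x, η)) ξ :=
    DifferentiableAt.comp ξ ((hf.differentiable two_ne_zero).differentiableAt) hp
  have hd : DifferentiableAt ℝ (fun x => f x η) ξ := hd'
  show HasDerivAt (fun x => f x η) (deriv (fun x => f x η) ξ) ξ
  exact hd.hasDerivAt

/-- Auxiliary: same in the second variable. -/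
lemma slice_hasDerivAt_eta {f : ℝ → ℝ → ℝ} (hf : ContDiff ℝ 2 (Function.uncurry f))
    (ξ η : ℝ) : HasDerivAt (fun y => f ξ y) (pdEta f ξ η) η := by
  have hp : DifferentiableAt ℝ (fun y : ℝ => (ξ, y)) η :=
    (differentiableAt_const ξ).prodMk differentiableAt_id
  have hd' : DifferentiableAt ℝ (Function.uncurry f ∘ fun y : ℝ => (ξ, y)) η :=
    DifferentiableAt.comp η ((hf.differentiable two_ne_zero).differentiableAt) hp
  have hd : DifferentiableAt ℝ (fun y => f ξ y) η := hd'
  show HasDerivAt (fun y => f ξ y) (deriv (fun y => f ξ y) η) η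
  exact hd.hasDerivAt

/-- If `(m₁,m₂,m₃)` is a C² solution of the linear system
`∂m₁/∂ξ = ρm₃, ∂m₂/∂ξ = ρm₁, ∂m₃/∂ξ = ρm₂`,
`∂m₁/∂η = -ρ⁻¹m₂, ∂m₂/∂η = -ρ⁻¹m₃, ∂m₃/∂η = -ρ⁻¹m₁`,
then where `m₂ ≠ 0` the function `u = (2m₁m₃ - m₂²)/m₂²` satisfies
`u·u_{ξη} - u_ξ·u_η + u³ - 1 = 0`; consequently wherever `u > 0`,
`φ = (1/2)·ln u` satisfies the Tzitzeica equation T2: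
`2 φ_{ξη} = -(e^{2φ} - e^{-4φ})`. -/
theorem stmt_11 (ρ : ℝ) (hρ : ρ ≠ 0) (m₁ m₂ m₃ : ℝ → ℝ → ℝ)
    (hm₁ : ContDiff ℝ 2 (Function.uncurry m₁))
    (hm₂ : ContDiff ℝ 2 (Function.uncurry m₂))
    (hm₃ : ContDiff ℝ 2 (Function.uncurry m₃))
    (hsys : ∀ ξ η : ℝ,
      pdXi m₁ ξ η = ρ * m₃ ξ η ∧ pdXi m₂ ξ η = ρ * m₁ ξ η ∧ pdXi m₃ ξ η = ρ * m₂ ξ η ∧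
      pdEta m₁ ξ η = -ρ⁻¹ * m₂ ξ η ∧ pdEta m₂ ξ η = -ρ⁻¹ * m₃ ξ η ∧
      pdEta m₃ ξ η = -ρ⁻¹ * m₁ ξ η)
    (u : ℝ → ℝ → ℝ)
    (hu : ∀ ξ η : ℝ, u ξ η = (2 * m₁ ξ η * m₃ ξ η - (m₂ ξ η) ^ 2) / (m₂ ξ η) ^ 2)
    (φ : ℝ → ℝ → ℝ) (hφ : ∀ ξ η : ℝ, φ ξ η = (1 / 2) * Real.log (u ξ η)) :
    ∀ ξ η : ℝ, m₂ ξ η ≠ 0 →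
      (u ξ η * mixedDeriv u ξ η - pdXi u ξ η * pdEta u ξ η + (u ξ η) ^ 3 - 1 = 0) ∧
      (0 < u ξ η →
        2 * mixedDeriv φ ξ η = -(Real.exp (2 * φ ξ η) - Real.exp (-4 * φ ξ η))) := by
  -- derivative facts for the slices of m₁, m₂, m₃
  have H1x : ∀ x y : ℝ, HasDerivAt (fun t => m₁ t y) (ρ * m₃ x y) x := fun x y => by
    have h := slice_hasDerivAt_xi hm₁ x y; rwa [(hsys x y).1] at h
  have H2x : ∀ x y : ℝ, HasDerivAt (fun t => m₂ t y) (ρ * m₁ x y) x := fun x y => by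
    have h := slice_hasDerivAt_xi hm₂ x y; rwa [(hsys x y).2.1] at h
  have H3x : ∀ x y : ℝ, HasDerivAt (fun t => m₃ t y) (ρ * m₂ x y) x := fun x y => by
    have h := slice_hasDerivAt_xi hm₃ x y; rwa [(hsys x y).2.2.1] at h
  have H1y : ∀ x y : ℝ, HasDerivAt (fun t => m₁ x t) (-ρ⁻¹ * m₂ x y) y := fun x y => by
    have h := slice_hasDerivAt_eta hm₁ x y; rwa [(hsys x y).2.2.2.1] at h
  have H2y : ∀ x y : ℝ, HasDerivAt (fun t => m₂ x t) (-ρ⁻¹ * m₃ x y) y := fun x y => by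
    have h := slice_hasDerivAt_eta hm₂ x y; rwa [(hsys x y).2.2.2.2.1] at h
  have H3y : ∀ x y : ℝ, HasDerivAt (fun t => m₃ x t) (-ρ⁻¹ * m₁ x y) y := fun x y => by
    have h := slice_hasDerivAt_eta hm₃ x y; rwa [(hsys x y).2.2.2.2.2] at h
  intro ξ η hb
  -- ∂u/∂η at (x,η) for any x with m₂ x η ≠ 0
  have hUy : ∀ x : ℝ, m₂ x η ≠ 0 →
      HasDerivAt (fun y => u x y) (EyF ρ m₁ m₂ m₃ η x) η := by
    intro x hx
    have hnum := (((H1y x η).const_mul 2).mul (H3y x η)).sub ((H2y x η).pow 2)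
    have h := hnum.div ((H2y x η).pow 2) (pow_ne_zero 2 hx)
    have hfun : (fun y => u x y) =
        fun y => (2 * m₁ x y * m₃ x y - (m₂ x y) ^ 2) / (m₂ x y) ^ 2 :=
      funext fun y => hu x y
    rw [hfun]
    refine h.congr_deriv ?_
    simp only [EyF, Pi.pow_apply, Pi.mul_apply, Pi.sub_apply, Pi.add_apply]
    field_simp
    ring
  -- ∂u/∂ξ at (ξ,η)
  have hUx : HasDerivAt (fun x => u x η)
      (2 * ρ * ((m₂ ξ η) * (m₃ ξ η) ^ 2 + (m₁ ξ η) * (m₂ ξ η) ^ 2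
        - 2 * (m₁ ξ η) ^ 2 * (m₃ ξ η)) / (m₂ ξ η) ^ 3) ξ := by
    have hnum := (((H1x ξ η).const_mul 2).mul (H3x ξ η)).sub ((H2x ξ η).pow 2)
    have h := hnum.div ((H2x ξ η).pow 2) (pow_ne_zero 2 hb)
    have hfun : (fun x => u x η) =
        fun x => (2 * m₁ x η * m₃ x η - (m₂ x η) ^ 2) / (m₂ x η) ^ 2 :=
      funext fun x => hu x η
    rw [hfun]
    refine h.congr_deriv ?_
    simp only [Pi.pow_apply, Pi.mul_apply, Pi.sub_apply, Pi.add_apply]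
    field_simp
    ring
  -- ∂(∂u/∂η)/∂ξ at (ξ,η)
  have hEy' : HasDerivAt (EyF ρ m₁ m₂ m₃ η)
      ((-2) * (((m₁ ξ η) ^ 3 + (m₂ ξ η) ^ 3 - 2 * (m₃ ξ η) ^ 3) * (m₂ ξ η)
        - 3 * (m₁ ξ η) * ((m₂ ξ η) ^ 2 * (m₃ ξ η) + (m₁ ξ η) ^ 2 * (m₂ ξ η)
          - 2 * (m₁ ξ η) * (m₃ ξ η) ^ 2)) / (m₂ ξ η) ^ 4) ξ := by
    have hN := ((((H2x ξ η).pow 2).mul (H3x ξ η)).add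
      (((H1x ξ η).pow 2).mul (H2x ξ η))).sub
      (((H1x ξ η).const_mul 2).mul ((H3x ξ η).pow 2))
    have h := (hN.const_mul (-2 * ρ⁻¹)).div ((H2x ξ η).pow 3) (pow_ne_zero 3 hb)
    have hfun : EyF ρ m₁ m₂ m₃ η = fun x => (-2 * ρ⁻¹) *
        ((m₂ x η) ^ 2 * (m₃ x η) + (m₁ x η) ^ 2 * (m₂ x η)
          - 2 * (m₁ x η) * (m₃ x η) ^ 2) / (m₂ x η) ^ 3 := rfl
    rw [hfun]
    refine h.congr_deriv ?_
    simp only [Pi.pow_apply, Pi.mul_apply, Pi.sub_apply, Pi.add_apply]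
    field_simp
    ring
  -- m₂ is nonzero near ξ (in the first variable)
  have hev : ∀ᶠ x in nhds ξ, m₂ x η ≠ 0 := (H2x ξ η).continuousAt.eventually_ne hb
  -- the values of the partial derivatives of u
  have hpde : pdEta u ξ η = EyF ρ m₁ m₂ m₃ η ξ := (hUy ξ hb).deriv
  have hpdx : pdXi u ξ η = 2 * ρ * ((m₂ ξ η) * (m₃ ξ η) ^ 2 + (m₁ ξ η) * (m₂ ξ η) ^ 2
      - 2 * (m₁ ξ η) ^ 2 * (m₃ ξ η)) / (m₂ ξ η) ^ 3 := hUx.deriv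
  have hmix : mixedDeriv u ξ η =
      (-2) * (((m₁ ξ η) ^ 3 + (m₂ ξ η) ^ 3 - 2 * (m₃ ξ η) ^ 3) * (m₂ ξ η)
        - 3 * (m₁ ξ η) * ((m₂ ξ η) ^ 2 * (m₃ ξ η) + (m₁ ξ η) ^ 2 * (m₂ ξ η)
          - 2 * (m₁ ξ η) * (m₃ ξ η) ^ 2)) / (m₂ ξ η) ^ 4 := by
    have heq : (fun x => deriv (fun y => u x y) η) =ᶠ[nhds ξ] EyF ρ m₁ m₂ m₃ η :=
      hev.mono fun x hx => (hUy x hx).deriv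
    rw [mixedDeriv, heq.deriv_eq, hEy'.deriv]
  -- the main algebraic identity
  have hrel : u ξ η * ((-2) * (((m₁ ξ η) ^ 3 + (m₂ ξ η) ^ 3 - 2 * (m₃ ξ η) ^ 3) * (m₂ ξ η)
        - 3 * (m₁ ξ η) * ((m₂ ξ η) ^ 2 * (m₃ ξ η) + (m₁ ξ η) ^ 2 * (m₂ ξ η)
          - 2 * (m₁ ξ η) * (m₃ ξ η) ^ 2)) / (m₂ ξ η) ^ 4)
      - (2 * ρ * ((m₂ ξ η) * (m₃ ξ η) ^ 2 + (m₁ ξ η) * (m₂ ξ η) ^ 2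
          - 2 * (m₁ ξ η) ^ 2 * (m₃ ξ η)) / (m₂ ξ η) ^ 3) * EyF ρ m₁ m₂ m₃ η ξ
      + (u ξ η) ^ 3 - 1 = 0 := by
    rw [hu]
    simp only [EyF]
    field_simp
    ring
  have hpart1 : u ξ η * mixedDeriv u ξ η - pdXi u ξ η * pdEta u ξ η
      + (u ξ η) ^ 3 - 1 = 0 := by
    rw [hmix, hpdx, hpde]; exact hrel
  refine ⟨hpart1, fun hpos => ?_⟩
  -- Part 2: the Tzitzeica equation for φ = (1/2) ln u
  have hune : u ξ η ≠ 0 := ne_of_gt hpos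
  -- ∂φ/∂η at (x,η) where m₂ x η ≠ 0 and u x η ≠ 0
  have hPy : ∀ x : ℝ, m₂ x η ≠ 0 → u x η ≠ 0 →
      HasDerivAt (fun y => φ x y) ((1 / 2 : ℝ) * (EyF ρ m₁ m₂ m₃ η x / u x η)) η := by
    intro x hx hux
    have h := ((hUy x hx).log hux).const_mul (1 / 2 : ℝ)
    have hfun : (fun y => φ x y) = fun y => (1 / 2 : ℝ) * Real.log (u x y) :=
      funext fun y => hφ x y
    rw [hfun]
    exact h
  -- u is positive near ξ (in the first variable)
  have hevpos : ∀ᶠ x in nhds ξ, 0 < u x η :=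
    hUx.continuousAt.eventually (eventually_gt_nhds hpos)
  have heqφ : (fun x => deriv (fun y => φ x y) η) =ᶠ[nhds ξ]
      (fun x => (1 / 2 : ℝ) * (EyF ρ m₁ m₂ m₃ η x / u x η)) :=
    (hev.and hevpos).mono fun x hx => (hPy x hx.1 hx.2.ne').deriv
  have hP' := (hEy'.div hUx hune).const_mul (1 / 2 : ℝ)
  have hmixφ : mixedDeriv φ ξ η = (1 / 2 : ℝ) *
      (((-2) * (((m₁ ξ η) ^ 3 + (m₂ ξ η) ^ 3 - 2 * (m₃ ξ η) ^ 3) * (m₂ ξ η)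
        - 3 * (m₁ ξ η) * ((m₂ ξ η) ^ 2 * (m₃ ξ η) + (m₁ ξ η) ^ 2 * (m₂ ξ η)
          - 2 * (m₁ ξ η) * (m₃ ξ η) ^ 2)) / (m₂ ξ η) ^ 4 * u ξ η
        - EyF ρ m₁ m₂ m₃ η ξ * (2 * ρ * ((m₂ ξ η) * (m₃ ξ η) ^ 2
          + (m₁ ξ η) * (m₂ ξ η) ^ 2 - 2 * (m₁ ξ η) ^ 2 * (m₃ ξ η)) / (m₂ ξ η) ^ 3))
        / (u ξ η) ^ 2) := by
    rw [mixedDeriv, heqφ.deriv_eq]; exact hP'.deriv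
  have h2φ : Real.exp (2 * φ ξ η) = u ξ η := by
    rw [hφ, show 2 * ((1 / 2 : ℝ) * Real.log (u ξ η)) = Real.log (u ξ η) by ring]
    exact Real.exp_log hpos
  have h4φ : Real.exp (-4 * φ ξ η) = ((u ξ η) ^ 2)⁻¹ := by
    have h : -4 * φ ξ η = -(Real.log (u ξ η) + Real.log (u ξ η)) := by rw [hφ]; ring
    rw [h, Real.exp_neg, Real.exp_add, Real.exp_log hpos, ← pow_two]
  rw [hmixφ, h2φ, h4φ]
  -- use the algebraic identity
  have hkey : (-2) * (((m₁ ξ η) ^ 3 + (m₂ ξ η) ^ 3 - 2 * (m₃ ξ η) ^ 3) * (m₂ ξ η)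
        - 3 * (m₁ ξ η) * ((m₂ ξ η) ^ 2 * (m₃ ξ η) + (m₁ ξ η) ^ 2 * (m₂ ξ η)
          - 2 * (m₁ ξ η) * (m₃ ξ η) ^ 2)) / (m₂ ξ η) ^ 4 * u ξ η
      - EyF ρ m₁ m₂ m₃ η ξ * (2 * ρ * ((m₂ ξ η) * (m₃ ξ η) ^ 2
        + (m₁ ξ η) * (m₂ ξ η) ^ 2 - 2 * (m₁ ξ η) ^ 2 * (m₃ ξ η)) / (m₂ ξ η) ^ 3)
      = 1 - (u ξ η) ^ 3 := by linarith [hrel]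
  rw [hkey]
  field_simp
  ring
end

section
/- Let ρ ≠ 0, c, μ₀₂, α be real numbers, and define X(ξ,η) = (1/2)(ρξ − η/ρ) and Ω̃(ξ,η) = (√3/2)(ρξ + η/ρ) − α. Define u(ξ,η) = [c²e^{−3X}(4cos²Ω̃ − 6) − 8cμ₀₂cos Ω̃ + μ₀₂²e^{3X}] / [4c²e^{−3X}cos²Ω̃ + 4cμ₀₂cos Ω̃ + μ₀₂²e^{3X}]. Then on the open set where the denominator is nonzero, u satisfies u·∂²u/∂ξ∂η − (∂u/∂ξ)(∂u/∂η) + u³ − 1 = 0; i.e., u = e^{2φ} gives the one-soliton solution of first type of the T2 Tzitzeica equation 2 ∂²φ/∂ξ∂η = −(e^{2φ} − e^{−4φ}). -/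
namespace Stmt12Aux

noncomputable def ee (ρ x y : ℝ) : ℝ := Real.exp (3 * (1 / 2 * (ρ * x - y / ρ)))
noncomputable def cc (ρ α x y : ℝ) : ℝ := Real.cos (Real.sqrt 3 / 2 * (ρ * x + y / ρ) - α)
noncomputable def sn (ρ α x y : ℝ) : ℝ := Real.sin (Real.sqrt 3 / 2 * (ρ * x + y / ρ) - α)

noncomputable def NN (ρ c m α x y : ℝ) : ℝ :=
  (-6)*c^2 + (4)*cc ρ α x y^2*c^2 + (-8)*ee ρ x y*cc ρ α x y*c*m + ee ρ x y^2*m^2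
noncomputable def GG (ρ c m α x y : ℝ) : ℝ := 2 * c * cc ρ α x y + m * ee ρ x y
noncomputable def UU (ρ c m α x y : ℝ) : ℝ := NN ρ c m α x y / GG ρ c m α x y ^ 2

noncomputable def PP (ρ c m α x y : ℝ) : ℝ :=
  (-12)*sn ρ α x y*c^3*Real.sqrt 3 + (18)*ee ρ x y*c^2*m + (-12)*ee ρ x y*cc ρ α x y*sn ρ α x y*c^2*m*Real.sqrt 3 + (-36)*ee ρ x y*cc ρ α x y^2*c^2*m + (6)*ee ρ x y^2*sn ρ α x y*c*m^2*Real.sqrt 3 + (18)*ee ρ x y^2*cc ρ α x y*c*m^2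

noncomputable def QQ (ρ c m α x y : ℝ) : ℝ :=
  (-12)*sn ρ α x y*c^3*Real.sqrt 3 + (-18)*ee ρ x y*c^2*m + (-12)*ee ρ x y*cc ρ α x y*sn ρ α x y*c^2*m*Real.sqrt 3 + (36)*ee ρ x y*cc ρ α x y^2*c^2*m + (6)*ee ρ x y^2*sn ρ α x y*c*m^2*Real.sqrt 3 + (-18)*ee ρ x y^2*cc ρ α x y*c*m^2

noncomputable def RR (ρ c m α x y : ℝ) : ℝ :=
  (-36)*sn ρ α x y^2*c^4*Real.sqrt 3^2 + (-12)*cc ρ α x y^2*c^4*Real.sqrt 3^2 + (-54)*ee ρ x y*cc ρ α x y*c^3*m + (-6)*ee ρ x y*cc ρ α x y*c^3*m*Real.sqrt 3^2 + (-24)*ee ρ x y*cc ρ α x y*sn ρ α x y^2*c^3*m*Real.sqrt 3^2 + (108)*ee ρ x y*cc ρ α x y^3*c^3*m + (-12)*ee ρ x y*cc ρ α x y^3*c^3*m*Real.sqrt 3^2 + (54)*ee ρ x y^2*c^2*m^2 + (24)*ee ρ x y^2*sn ρ α x y^2*c^2*m^2*Real.sqrt 3^2 + (-216)*ee ρ x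 y^2*cc ρ α x y^2*c^2*m^2 + (27)*ee ρ x y^3*cc ρ α x y*c*m^3 + (3)*ee ρ x y^3*cc ρ α x y*c*m^3*Real.sqrt 3^2

noncomputable def VV (ρ c m α x y : ℝ) : ℝ := QQ ρ c m α x y / (ρ * GG ρ c m α x y ^ 3)

lemma key_id (c m t e co si : ℝ) (ht : t ^ 2 = 3) (hs : si ^ 2 = 1 - co ^ 2) :
    ((-6)*c^2 + (4)*co^2*c^2 + (-8)*e*co*c*m + (1)*e^2*m^2) *
      ((-36)*si^2*c^4*t^2 + (-12)*co^2*c^4*t^2 + (-54)*e*co*c^3*m + (-6)*e*co*c^3*m*t^2 + (-24)*e*co*si^2*c^3*m*t^2 + (108)*e*co^3*c^3*m + (-12)*e*co^3*c^3*m*t^2 + (54)*e^2*c^2*m^2 + (24)*e^2*si^2*c^2*m^2*t^2 + (-216)*e^2*co^2*c^2*m^2 + (27)*e^3*co*c*m^3 + (3)*e^3*co*c*m^3*t^2)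
    - ((-12)*si*c^3*t + (18)*e*c^2*m + (-12)*e*co*si*c^2*m*t + (-36)*e*co^2*c^2*m + (6)*e^2*si*c*m^2*t + (18)*e^2*co*c*m^2) *
      ((-12)*si*c^3*t + (-18)*e*c^2*m + (-12)*e*co*si*c^2*m*t + (36)*e*co^2*c^2*m + (6)*e^2*si*c*m^2*t + (-18)*e^2*co*c*m^2)
    + ((-6)*c^2 + (4)*co^2*c^2 + (-8)*e*co*c*m + (1)*e^2*m^2) ^ 3
    - ((2)*co*c + (1)*e*m) ^ 6 = 0 := by
  linear_combination
    ((216)*c^6 + (-432)*co^2*c^6 + (432)*e*co*c^5*m + (-288)*e*co^3*c^5*m + (-108)*e^2*c^4*m^2 + (432)*e^2*co^2*c^4*m^2 + (-216)*e^3*co*c^3*m^3 + (-36)*e^4*c^2*m^4) * hs +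
    ((72)*si^2*c^6 + (72)*co^2*c^6 + (-144)*co^2*si^2*c^6 + (-48)*co^4*c^6 + (36)*e*co*c^5*m + (144)*e*co*si^2*c^5*m + (144)*e*co^3*c^5*m + (-96)*e*co^3*si^2*c^5*m + (-48)*e*co^5*c^5*m + (-36)*e^2*si^2*c^4*m^2 + (36)*e^2*co^2*c^4*m^2 + (144)*e^2*co^2*si^2*c^4*m^2 + (96)*e^2*co^4*c^4*m^2 + (-24)*e^3*co*c^3*m^3 + (-72)*e^3*co*si^2*c^3*m^3 + (-12)*e^4*si^2*c^2*m^4 + (-24)*e^4*co^2*c^2*m^4 + (3)*e^5*co*c*m^5) * ht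

lemma hcc_x (ρ α y : ℝ) (x : ℝ) :
    HasDerivAt (fun s => cc ρ α s y) (-sn ρ α x y * (Real.sqrt 3 / 2 * ρ)) x := by
  have h : HasDerivAt (fun s : ℝ => Real.sqrt 3 / 2 * (ρ * s + y / ρ) - α)
      (Real.sqrt 3 / 2 * ρ) x := by
    simpa using ((((hasDerivAt_id x).const_mul ρ).add_const (y / ρ)).const_mul
      (Real.sqrt 3 / 2)).sub_const α
  simpa [cc, sn] using h.cos

lemma hsn_x (ρ α y : ℝ) (x : ℝ) :
    HasDerivAt (fun s => sn ρ α s y) (cc ρ α x y * (Real.sqrt 3 / 2 * ρ)) x := by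
  have h : HasDerivAt (fun s : ℝ => Real.sqrt 3 / 2 * (ρ * s + y / ρ) - α)
      (Real.sqrt 3 / 2 * ρ) x := by
    simpa using ((((hasDerivAt_id x).const_mul ρ).add_const (y / ρ)).const_mul
      (Real.sqrt 3 / 2)).sub_const α
  simpa [cc, sn] using h.sin

lemma hee_x (ρ y : ℝ) (x : ℝ) :
    HasDerivAt (fun s => ee ρ s y) (ee ρ x y * (3 / 2 * ρ)) x := by
  have h : HasDerivAt (fun s : ℝ => 3 * (1 / 2 * (ρ * s - y / ρ))) (3 / 2 * ρ) x := by
    have := ((((hasDerivAt_id x).const_mul ρ).sub_const (y / ρ)).const_mul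
      ((1:ℝ) / 2)).const_mul 3
    exact this.congr_deriv (by ring)
  simpa [ee] using h.exp

lemma hcc_y (ρ α x : ℝ) (y : ℝ) :
    HasDerivAt (fun s => cc ρ α x s) (-sn ρ α x y * (Real.sqrt 3 / 2 / ρ)) y := by
  have h : HasDerivAt (fun s : ℝ => Real.sqrt 3 / 2 * (ρ * x + s / ρ) - α)
      (Real.sqrt 3 / 2 / ρ) y := by
    have := ((((hasDerivAt_id y).div_const ρ).const_add (ρ * x)).const_mul
      (Real.sqrt 3 / 2)).sub_const α
    exact this.congr_deriv (by ring)
  simpa [cc, sn] using h.cos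

lemma hsn_y (ρ α x : ℝ) (y : ℝ) :
    HasDerivAt (fun s => sn ρ α x s) (cc ρ α x y * (Real.sqrt 3 / 2 / ρ)) y := by
  have h : HasDerivAt (fun s : ℝ => Real.sqrt 3 / 2 * (ρ * x + s / ρ) - α)
      (Real.sqrt 3 / 2 / ρ) y := by
    have := ((((hasDerivAt_id y).div_const ρ).const_add (ρ * x)).const_mul
      (Real.sqrt 3 / 2)).sub_const α
    exact this.congr_deriv (by ring)
  simpa [cc, sn] using h.sin

lemma hee_y (ρ x : ℝ) (y : ℝ) :
    HasDerivAt (fun s => ee ρ x s) (ee ρ x y * (-(3 / 2) / ρ)) y := by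
  have h : HasDerivAt (fun s : ℝ => 3 * (1 / 2 * (ρ * x - s / ρ))) (-(3 / 2) / ρ) y := by
    have := ((((hasDerivAt_id y).div_const ρ).const_sub (ρ * x)).const_mul
      ((1:ℝ) / 2)).const_mul 3
    exact this.congr_deriv (by ring)
  simpa [ee] using h.exp

lemma hGG_ne (ρ c m α x y : ℝ) (hG : GG ρ c m α x y ≠ 0) :
    GG ρ c m α x y ^ 2 ≠ 0 := pow_ne_zero 2 hG

lemma hU_x (ρ c m α : ℝ) (x y : ℝ) (hG : GG ρ c m α x y ≠ 0) :
    HasDerivAt (fun s => UU ρ c m α s y)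
      (ρ * PP ρ c m α x y / GG ρ c m α x y ^ 3) x := by
  have hC := hcc_x ρ α y x
  have hS := hsn_x ρ α y x
  have hE := hee_x ρ y x
  have hN := ((((hC.pow 2).const_mul ((4:ℝ)*c^2)).sub_const (6*c^2)).sub
      ((hC.mul hE).const_mul ((8:ℝ)*c*m))).add ((hE.pow 2).const_mul (m^2))
  have hGd := (hC.const_mul ((2:ℝ)*c)).add (hE.const_mul m)
  have hGne : 2 * c * cc ρ α x y + m * ee ρ x y ≠ 0 := by
    intro h; exact hG (by unfold GG; linarith)
  have hraw := hN.div (hGd.pow 2) (pow_ne_zero 2 hGne)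
  have h2 : HasDerivAt (fun s => UU ρ c m α s y) _ x :=
    hraw.congr_of_eventuallyEq (Filter.Eventually.of_forall
      (fun s => by simp only [UU, NN, GG, Pi.add_apply, Pi.sub_apply, Pi.mul_apply, Pi.pow_apply, Pi.div_apply]; ring))
  refine h2.congr_deriv ?_
  simp only [Pi.add_apply, Pi.sub_apply, Pi.mul_apply, Pi.pow_apply, Pi.div_apply]
  simp only [PP, NN, GG]
  rw [div_eq_div_iff (pow_ne_zero _ (pow_ne_zero _ hGne)) (pow_ne_zero _ hGne)]
  ring

lemma hU_y (ρ c m α : ℝ) (hρ : ρ ≠ 0) (x y : ℝ) (hG : GG ρ c m α x y ≠ 0) :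
    HasDerivAt (fun s => UU ρ c m α x s) (VV ρ c m α x y) y := by
  have hC := hcc_y ρ α x y
  have hS := hsn_y ρ α x y
  have hE := hee_y ρ x y
  have hN := ((((hC.pow 2).const_mul ((4:ℝ)*c^2)).sub_const (6*c^2)).sub
      ((hC.mul hE).const_mul ((8:ℝ)*c*m))).add ((hE.pow 2).const_mul (m^2))
  have hGd := (hC.const_mul ((2:ℝ)*c)).add (hE.const_mul m)
  have hGne : 2 * c * cc ρ α x y + m * ee ρ x y ≠ 0 := by
    intro h; exact hG (by unfold GG; linarith)
  have hraw := hN.div (hGd.pow 2) (pow_ne_zero 2 hGne)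
  have h2 : HasDerivAt (fun s => UU ρ c m α x s) _ y :=
    hraw.congr_of_eventuallyEq (Filter.Eventually.of_forall
      (fun s => by simp only [UU, NN, GG, Pi.add_apply, Pi.sub_apply, Pi.mul_apply, Pi.pow_apply, Pi.div_apply]; ring))
  refine h2.congr_deriv ?_
  simp only [Pi.add_apply, Pi.sub_apply, Pi.mul_apply, Pi.pow_apply, Pi.div_apply]
  simp only [VV, QQ, NN, GG]
  rw [div_eq_div_iff (pow_ne_zero _ (pow_ne_zero _ hGne)) (mul_ne_zero hρ (pow_ne_zero _ hGne))]
  field_simp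
  ring

set_option maxHeartbeats 2000000 in
lemma hV_x (ρ c m α : ℝ) (hρ : ρ ≠ 0) (x y : ℝ) (hG : GG ρ c m α x y ≠ 0) :
    HasDerivAt (fun s => VV ρ c m α s y)
      (RR ρ c m α x y / GG ρ c m α x y ^ 4) x := by
  have hC := hcc_x ρ α y x
  have hS := hsn_x ρ α y x
  have hE := hee_x ρ y x
  have hGd := (hC.const_mul ((2:ℝ)*c)).add (hE.const_mul m)
  have hGne : 2 * c * cc ρ α x y + m * ee ρ x y ≠ 0 := by
    intro h; exact hG (by unfold GG; linarith)
  have hQ := (((((hS.const_mul ((-12:ℝ)*c^3*Real.sqrt 3)).add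
      (hE.const_mul ((-18:ℝ)*c^2*m))).add
      (((hE.mul hC).mul hS).const_mul ((-12:ℝ)*c^2*m*Real.sqrt 3))).add
      ((hE.mul (hC.pow 2)).const_mul ((36:ℝ)*c^2*m))).add
      (((hE.pow 2).mul hS).const_mul ((6:ℝ)*c*m^2*Real.sqrt 3))).add
      (((hE.pow 2).mul hC).const_mul ((-18:ℝ)*c*m^2))
  have hden := (hGd.pow 3).const_mul ρ
  have hdne : ρ * (2 * c * cc ρ α x y + m * ee ρ x y) ^ 3 ≠ 0 :=
    mul_ne_zero hρ (pow_ne_zero 3 hGne)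
  have hraw := hQ.div hden hdne
  have h2 : HasDerivAt (fun s => VV ρ c m α s y) _ x :=
    hraw.congr_of_eventuallyEq (Filter.Eventually.of_forall
      (fun s => by simp only [VV, QQ, GG, Pi.add_apply, Pi.sub_apply, Pi.mul_apply, Pi.pow_apply, Pi.div_apply]; ring))
  refine h2.congr_deriv ?_
  simp only [Pi.add_apply, Pi.sub_apply, Pi.mul_apply, Pi.pow_apply, Pi.div_apply]
  simp only [RR, QQ, GG]
  generalize Real.sqrt 3 = t
  rw [div_eq_div_iff (pow_ne_zero _ hdne) (pow_ne_zero _ hGne)]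
  ring

lemma cont_G (ρ c m α η : ℝ) : Continuous (fun x => GG ρ c m α x η) := by
  unfold GG cc ee
  fun_prop

set_option maxHeartbeats 4000000 in
theorem main (ρ c m α : ℝ) (hρ : ρ ≠ 0) (ξ η : ℝ) (hG : GG ρ c m α ξ η ≠ 0) :
    UU ρ c m α ξ η * mixedDeriv (UU ρ c m α) ξ η -
      pdXi (UU ρ c m α) ξ η * pdEta (UU ρ c m α) ξ η + UU ρ c m α ξ η ^ 3 - 1 = 0 := by
  have hux : pdXi (UU ρ c m α) ξ η = ρ * PP ρ c m α ξ η / GG ρ c m α ξ η ^ 3 :=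
    (hU_x ρ c m α ξ η hG).deriv
  have huy : pdEta (UU ρ c m α) ξ η = VV ρ c m α ξ η :=
    (hU_y ρ c m α hρ ξ η hG).deriv
  have hev : (fun x => deriv (fun y => UU ρ c m α x y) η) =ᶠ[nhds ξ]
      (fun x => VV ρ c m α x η) := by
    have := ((cont_G ρ c m α η).continuousAt (x := ξ)).eventually_ne hG
    filter_upwards [this] with x hx
    exact (hU_y ρ c m α hρ x η hx).deriv
  have huxy : mixedDeriv (UU ρ c m α) ξ η = RR ρ c m α ξ η / GG ρ c m α ξ η ^ 4 := by
    unfold mixedDeriv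
    rw [hev.deriv_eq]
    exact (hV_x ρ c m α hρ ξ η hG).deriv
  rw [hux, huy, huxy]
  have ht : Real.sqrt 3 ^ 2 = 3 := Real.sq_sqrt (by norm_num)
  have hs : sn ρ α ξ η ^ 2 = 1 - cc ρ α ξ η ^ 2 := by
    have := Real.sin_sq_add_cos_sq (Real.sqrt 3 / 2 * (ρ * ξ + η / ρ) - α)
    unfold sn cc
    linarith
  have key := key_id c m (Real.sqrt 3) (ee ρ ξ η) (cc ρ α ξ η) (sn ρ α ξ η) ht hs
  have hGne : 2 * c * cc ρ α ξ η + m * ee ρ ξ η ≠ 0 := by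
    intro h; exact hG (by unfold GG; linarith)
  simp only [UU, VV, NN, PP, QQ, RR, GG] at key ⊢
  generalize Real.sqrt 3 = t at key ⊢
  generalize cc ρ α ξ η = co at key hGne ⊢
  generalize ee ρ ξ η = e at key hGne ⊢
  generalize sn ρ α ξ η = si at key hGne ⊢
  generalize hg : (2 * c * co + m * e) = g at hGne ⊢
  have hGi : (g * g⁻¹) = 1 := mul_inv_cancel₀ hGne
  have hρi : ρ * ρ⁻¹ = 1 := mul_inv_cancel₀ hρ
  linear_combination g⁻¹ ^ 6 * key - ((-12)*si*c^3*t + (18)*e*c^2*m + (-12)*e*co*si*c^2*m*t + (-36)*e*co^2*c^2*m + (6)*e^2*si*c*m^2*t + (18)*e^2*co*c*m^2) * ((-12)*si*c^3*t + (-18)*e*c^2*m + (-12)*e*co*si*c^2*m*t + (36)*e*co^2*c^2*m + (6)*e^2*si*c*m^2*t + (-18)*e^2*co*c*m^2) * g⁻¹ ^ 6 * hρi + (1 + (g * g⁻¹) + (g * g⁻¹)^2 + (g * g⁻¹)^3 + (g * g⁻¹)^4 + (g * g⁻¹)^5) * hGi + g⁻¹ ^ 6 * (g^5 + (2 * c *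 co + m * e)*g^4 + (2 * c * co + m * e)^2*g^3 + (2 * c * co + m * e)^3*g^2 + (2 * c * co + m * e)^4*g + (2 * c * co + m * e)^5) * hg

end Stmt12Aux

/-- The explicit one-soliton solution of first type: with
`X = (1/2)(ρξ - η/ρ)`, `Ω̃ = (√3/2)(ρξ + η/ρ) - α`, the function
`u = [c²e^{-3X}(4cos²Ω̃ - 6) - 8cμ₀₂cos Ω̃ + μ₀₂²e^{3X}] /
     [4c²e^{-3X}cos²Ω̃ + 4cμ₀₂cos Ω̃ + μ₀₂²e^{3X}]`
satisfies `u·u_{ξη} - u_ξ·u_η + u³ - 1 = 0` wherever the denominator is nonzero,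
i.e. `u = e^{2φ}` is a solution of the T2 Tzitzeica equation. -/
theorem stmt_12 (ρ c μ₀₂ α : ℝ) (hρ : ρ ≠ 0)
    (X Ω : ℝ → ℝ → ℝ)
    (hX : ∀ ξ η : ℝ, X ξ η = (1 / 2) * (ρ * ξ - η / ρ))
    (hΩ : ∀ ξ η : ℝ, Ω ξ η = (Real.sqrt 3 / 2) * (ρ * ξ + η / ρ) - α)
    (num den u : ℝ → ℝ → ℝ)
    (hnum : ∀ ξ η : ℝ, num ξ η =
      c ^ 2 * Real.exp (-3 * X ξ η) * (4 * Real.cos (Ω ξ η) ^ 2 - 6) -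
        8 * c * μ₀₂ * Real.cos (Ω ξ η) + μ₀₂ ^ 2 * Real.exp (3 * X ξ η))
    (hden : ∀ ξ η : ℝ, den ξ η =
      4 * c ^ 2 * Real.exp (-3 * X ξ η) * Real.cos (Ω ξ η) ^ 2 +
        4 * c * μ₀₂ * Real.cos (Ω ξ η) + μ₀₂ ^ 2 * Real.exp (3 * X ξ η))
    (hu : ∀ ξ η : ℝ, u ξ η = num ξ η / den ξ η) :
    ∀ ξ η : ℝ, den ξ η ≠ 0 →
      u ξ η * mixedDeriv u ξ η - pdXi u ξ η * pdEta u ξ η + (u ξ η) ^ 3 - 1 = 0 := by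
  intro ξ η hden0
  -- rewrite den as GG² * ee⁻¹, num as NN * ee⁻¹
  have hexp : ∀ x y : ℝ, Real.exp (-3 * X x y) = (Stmt12Aux.ee ρ x y)⁻¹ := by
    intro x y
    rw [hX, Stmt12Aux.ee, ← Real.exp_neg]
    congr 1
    ring
  have hexp' : ∀ x y : ℝ, Real.exp (3 * X x y) = Stmt12Aux.ee ρ x y := by
    intro x y
    rw [hX, Stmt12Aux.ee]
  have hcos : ∀ x y : ℝ, Real.cos (Ω x y) = Stmt12Aux.cc ρ α x y := by
    intro x y
    rw [hΩ, Stmt12Aux.cc]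
  have heene : ∀ x y : ℝ, Stmt12Aux.ee ρ x y ≠ 0 := fun x y => (Real.exp_pos _).ne'
  have hdenG : ∀ x y : ℝ, den x y = Stmt12Aux.GG ρ c μ₀₂ α x y ^ 2 * (Stmt12Aux.ee ρ x y)⁻¹ := by
    intro x y
    rw [hden, hexp, hexp', hcos]
    unfold Stmt12Aux.GG
    field_simp [heene x y]
    ring
  have hueq : u = Stmt12Aux.UU ρ c μ₀₂ α := by
    funext x y
    rw [hu, hdenG, hnum, hexp, hexp', hcos]
    unfold Stmt12Aux.UU
    rw [show c ^ 2 * (Stmt12Aux.ee ρ x y)⁻¹ * (4 * Stmt12Aux.cc ρ α x y ^ 2 - 6) -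
        8 * c * μ₀₂ * Stmt12Aux.cc ρ α x y + μ₀₂ ^ 2 * Stmt12Aux.ee ρ x y =
        Stmt12Aux.NN ρ c μ₀₂ α x y * (Stmt12Aux.ee ρ x y)⁻¹ from by
      unfold Stmt12Aux.NN; field_simp [heene x y]; ring]
    rw [mul_div_mul_right _ _ (inv_ne_zero (heene x y))]
  have hGne : Stmt12Aux.GG ρ c μ₀₂ α ξ η ≠ 0 := by
    intro h
    apply hden0
    rw [hdenG, h]
    simp
  rw [hueq]
  exact Stmt12Aux.main ρ c μ₀₂ α hρ ξ η hGne
end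

section
/- Let ρ ≠ 0 and α be real numbers and define Θ(ξ,η) = (√3/2)(ρξ + η/ρ) − α. Then on the open set where cos Θ ≠ 0, the function u(ξ,η) = −(3/2)·tan²Θ − 1/2 satisfies u·∂²u/∂ξ∂η − (∂u/∂ξ)(∂u/∂η) + u³ − 1 = 0. Equivalently, the complex-valued function φ(ξ,η) = iπ/2 + (1/2)·ln[(3/2)·tan²Θ + 1/2] satisfies the T2 Tzitzeica equation 2 ∂²φ/∂ξ∂η = −(e^{2φ} − e^{−4φ}) there. -/
lemma tan_sq_aux {x : ℝ} (h : Real.cos x ≠ 0) :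
    1 / Real.cos x ^ 2 = 1 + Real.tan x ^ 2 := by
  rw [Real.tan_eq_sin_div_cos]
  field_simp
  exact (Real.cos_sq_add_sin_sq x).symm

lemma hasDerivAt_tan_comp (s : ℝ) (f : ℝ → ℝ) (p : ℝ)
    (hf : HasDerivAt f s p) (h : Real.cos (f p) ≠ 0) :
    HasDerivAt (fun q => Real.tan (f q)) ((1 + Real.tan (f p) ^ 2) * s) p := by
  have := (Real.hasDerivAt_tan h).comp p hf
  rwa [tan_sq_aux h] at this

lemma hasDerivAt_u_aux (s : ℝ) (f : ℝ → ℝ) (p : ℝ)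
    (hf : HasDerivAt f s p) (h : Real.cos (f p) ≠ 0) :
    HasDerivAt (fun q => -(3/2) * Real.tan (f q) ^ 2 - 1/2)
      (-3 * Real.tan (f p) * (1 + Real.tan (f p) ^ 2) * s) p := by
  have h1 := hasDerivAt_tan_comp s f p hf h
  have h2 := ((h1.pow 2).const_mul (-(3/2):ℝ)).sub_const (1/2)
  exact h2.congr_deriv (by ring)

lemma hasDerivAt_w_aux (K s : ℝ) (f : ℝ → ℝ) (p : ℝ)
    (hf : HasDerivAt f s p) (h : Real.cos (f p) ≠ 0) :
    HasDerivAt (fun q => K * Real.tan (f q) * (1 + Real.tan (f q) ^ 2))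
      (K * (1 + Real.tan (f p) ^ 2) * (1 + 3 * Real.tan (f p) ^ 2) * s) p := by
  have h1 := hasDerivAt_tan_comp s f p hf h
  have h2 := (h1.const_mul K).mul ((h1.pow 2).const_add 1)
  exact h2.congr_deriv (by simp only [Pi.pow_apply]; ring)

lemma hasDerivAt_wden_aux (s : ℝ) (f : ℝ → ℝ) (p : ℝ)
    (hf : HasDerivAt f s p) (h : Real.cos (f p) ≠ 0) :
    HasDerivAt (fun q => (3/2) * Real.tan (f q) ^ 2 + 1/2)
      (3 * Real.tan (f p) * (1 + Real.tan (f p) ^ 2) * s) p := by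
  have h1 := hasDerivAt_tan_comp s f p hf h
  have h2 := ((h1.pow 2).const_mul ((3:ℝ)/2)).add_const (1/2)
  exact h2.congr_deriv (by ring)

lemma hasDerivAt_v_aux (s : ℝ) (f : ℝ → ℝ) (p : ℝ)
    (hf : HasDerivAt f s p) (h : Real.cos (f p) ≠ 0) :
    HasDerivAt (fun q => Real.log ((3/2) * Real.tan (f q) ^ 2 + 1/2))
      ((3 * Real.tan (f p) * (1 + Real.tan (f p) ^ 2) * s) /
        ((3/2) * Real.tan (f p) ^ 2 + 1/2)) p := by
  have hW : ((3:ℝ)/2) * Real.tan (f p) ^ 2 + 1/2 ≠ 0 := by positivity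
  have h1 := hasDerivAt_wden_aux s f p hf h
  have h2 := (Real.hasDerivAt_log hW).comp p h1
  exact h2.congr_deriv (by ring)


/-- The mixed second partial derivative of a complex-valued function. -/
noncomputable def mixedDerivC (f : ℝ → ℝ → ℂ) (ξ η : ℝ) : ℂ :=
  deriv (fun x => deriv (fun y => f x y) η) ξ

/-- With `Θ = (√3/2)(ρξ + η/ρ) - α`, on the set where `cos Θ ≠ 0` the function
`u = -(3/2)tan²Θ - 1/2` satisfies `u·u_{ξη} - u_ξ·u_η + u³ - 1 = 0`;
equivalently the complex-valued `φ = iπ/2 + (1/2)·ln[(3/2)tan²Θ + 1/2]`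
satisfies the T2 Tzitzeica equation `2 φ_{ξη} = -(e^{2φ} - e^{-4φ})` there. -/
theorem stmt_13 (ρ α : ℝ) (hρ : ρ ≠ 0)
    (Θ : ℝ → ℝ → ℝ)
    (hΘ : ∀ ξ η : ℝ, Θ ξ η = (Real.sqrt 3 / 2) * (ρ * ξ + η / ρ) - α)
    (u : ℝ → ℝ → ℝ)
    (hu : ∀ ξ η : ℝ, u ξ η = -(3 / 2) * Real.tan (Θ ξ η) ^ 2 - 1 / 2)
    (φ : ℝ → ℝ → ℂ)
    (hφ : ∀ ξ η : ℝ, φ ξ η =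
      Complex.I * Real.pi / 2 +
        (1 / 2) * (Real.log ((3 / 2) * Real.tan (Θ ξ η) ^ 2 + 1 / 2) : ℂ)) :
    ∀ ξ η : ℝ, Real.cos (Θ ξ η) ≠ 0 →
      (u ξ η * mixedDeriv u ξ η - pdXi u ξ η * pdEta u ξ η + (u ξ η) ^ 3 - 1 = 0) ∧
      (2 * mixedDerivC φ ξ η =
        -(Complex.exp (2 * φ ξ η) - Complex.exp (-4 * φ ξ η))) := by
  intro ξ η h
  set c1 : ℝ := Real.sqrt 3 / 2 * ρ with hc1def
  set c2 : ℝ := Real.sqrt 3 / 2 / ρ with hc2def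
  have h3 : Real.sqrt 3 * Real.sqrt 3 = 3 := Real.mul_self_sqrt (by norm_num)
  have hcc : c1 * c2 = 3 / 4 := by
    have hsq : Real.sqrt 3 ^ 2 = 3 := Real.sq_sqrt (by norm_num)
    rw [hc1def, hc2def]
    field_simp
    linear_combination 4 * h3
  have h3pos : (0:ℝ) < Real.sqrt 3 := Real.sqrt_pos.mpr (by norm_num)
  have hc1ne : c1 ≠ 0 := by
    rw [hc1def]; exact mul_ne_zero (by positivity) hρ
  have hc2e : c2 = 3 / (4 * c1) := by
    field_simp
    linear_combination 4 * hcc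
  -- derivatives of Θ
  have hΘξ : ∀ (y x : ℝ), HasDerivAt (fun x' => Θ x' y) c1 x := by
    intro y x
    have hfun : (fun x' => Θ x' y) =
        fun x' => c1 * x' + (Real.sqrt 3 / 2 * (y / ρ) - α) := by
      funext x'; rw [hΘ]; ring
    rw [hfun]
    simpa using ((hasDerivAt_id x).const_mul c1).add_const
      (Real.sqrt 3 / 2 * (y / ρ) - α)
  have hΘη : ∀ (x y : ℝ), HasDerivAt (fun y' => Θ x y') c2 y := by
    intro x y
    have hfun : (fun y' => Θ x y') =
        fun y' => c2 * y' + (Real.sqrt 3 / 2 * (ρ * x) - α) := by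
      funext y'; rw [hΘ, hc2def]; field_simp; ring
    rw [hfun]
    simpa using ((hasDerivAt_id y).const_mul c2).add_const
      (Real.sqrt 3 / 2 * (ρ * x) - α)
  -- eventual nonvanishing of cos along the ξ direction
  have hcont : Continuous fun x => Θ x η := by
    have hfun : (fun x' => Θ x' η) =
        fun x' => c1 * x' + (Real.sqrt 3 / 2 * (η / ρ) - α) := by
      funext x'; rw [hΘ]; ring
    rw [hfun]; continuity
  have hev : ∀ᶠ x in nhds ξ, Real.cos (Θ x η) ≠ 0 :=
    (Real.continuous_cos.comp hcont).continuousAt.eventually_ne h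
  set t : ℝ := Real.tan (Θ ξ η) with htdef
  -- u as a function literal
  have huf : ∀ x, (fun y' => u x y') = fun y' => -(3/2) * Real.tan (Θ x y') ^ 2 - 1/2 := by
    intro x; funext y'; rw [hu]
  have huf' : ∀ y, (fun x' => u x' y) = fun x' => -(3/2) * Real.tan (Θ x' y) ^ 2 - 1/2 := by
    intro y; funext x'; rw [hu]
  -- first partials of u
  have hduη : ∀ x y, Real.cos (Θ x y) ≠ 0 →
      HasDerivAt (fun y' => u x y')
        (-3 * Real.tan (Θ x y) * (1 + Real.tan (Θ x y) ^ 2) * c2) y := by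
    intro x y hxy
    rw [huf x]
    exact hasDerivAt_u_aux c2 (fun y' => Θ x y') y (hΘη x y) hxy
  have hduξ : HasDerivAt (fun x' => u x' η)
      (-3 * t * (1 + t ^ 2) * c1) ξ := by
    rw [huf' η]
    exact hasDerivAt_u_aux c1 (fun x' => Θ x' η) ξ (hΘξ η ξ) h
  have hpdEta : pdEta u ξ η = -3 * t * (1 + t ^ 2) * c2 := (hduη ξ η h).deriv
  have hpdXi : pdXi u ξ η = -3 * t * (1 + t ^ 2) * c1 := hduξ.deriv
  -- mixed derivative of u
  have hinner : (fun x => deriv (fun y => u x y) η) =ᶠ[nhds ξ]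
      (fun x => (-3 * c2) * Real.tan (Θ x η) * (1 + Real.tan (Θ x η) ^ 2)) := by
    filter_upwards [hev] with x hx
    rw [(hduη x η hx).deriv]; ring
  have houter := hasDerivAt_w_aux (-3 * c2) c1 (fun x => Θ x η) ξ (hΘξ η ξ) h
  have hmix : mixedDeriv u ξ η = (-3 * c2) * (1 + t ^ 2) * (1 + 3 * t ^ 2) * c1 := by
    unfold mixedDeriv
    rw [hinner.deriv_eq]
    exact houter.deriv
  have part1 : u ξ η * mixedDeriv u ξ η - pdXi u ξ η * pdEta u ξ η + u ξ η ^ 3 - 1 = 0 := by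
    rw [hmix, hpdXi, hpdEta, hu, ← htdef, hc2e]
    field_simp
    ring
  refine ⟨part1, ?_⟩
  -- complex part
  have hφf : ∀ x, (fun y' => φ x y') = fun y' => Complex.I * Real.pi / 2 +
      (1/2 : ℂ) * ((Real.log ((3/2) * Real.tan (Θ x y') ^ 2 + 1/2) : ℝ) : ℂ) := by
    intro x; funext y'; rw [hφ]
  have hdφη : ∀ x y, Real.cos (Θ x y) ≠ 0 →
      HasDerivAt (fun y' => φ x y')
        ((1/2 : ℂ) * (((3 * Real.tan (Θ x y) * (1 + Real.tan (Θ x y) ^ 2) * c2) /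
          ((3/2) * Real.tan (Θ x y) ^ 2 + 1/2) : ℝ) : ℂ)) y := by
    intro x y hxy
    rw [hφf x]
    have hv := hasDerivAt_v_aux c2 (fun y' => Θ x y') y (hΘη x y) hxy
    have := (hv.ofReal_comp.const_mul ((1:ℂ)/2)).const_add (Complex.I * Real.pi / 2)
    simpa using this
  have hinner2 : (fun x => deriv (fun y => φ x y) η) =ᶠ[nhds ξ]
      (fun x => (1/2 : ℂ) * ((((3 * c2) * Real.tan (Θ x η) * (1 + Real.tan (Θ x η) ^ 2)) /
        ((3/2) * Real.tan (Θ x η) ^ 2 + 1/2) : ℝ) : ℂ)) := by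
    filter_upwards [hev] with x hx
    rw [(hdφη x η hx).deriv]
    norm_cast
    ring_nf
  have hN := hasDerivAt_w_aux (3 * c2) c1 (fun x => Θ x η) ξ (hΘξ η ξ) h
  have hD := hasDerivAt_wden_aux c1 (fun x => Θ x η) ξ (hΘξ η ξ) h
  have hDne : ((3:ℝ)/2) * Real.tan (Θ ξ η) ^ 2 + 1/2 ≠ 0 := by positivity
  have hg := hN.div hD hDne
  have hmix2 : mixedDerivC φ ξ η = (1/2 : ℂ) *
      ((((3 * c2) * (1 + t ^ 2) * (1 + 3 * t ^ 2) * c1 *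
           ((3/2) * t ^ 2 + 1/2) -
         (3 * c2) * t * (1 + t ^ 2) * (3 * t * (1 + t ^ 2) * c1)) /
        ((3/2) * t ^ 2 + 1/2) ^ 2 : ℝ) : ℂ) := by
    unfold mixedDerivC
    rw [hinner2.deriv_eq]
    exact (hg.ofReal_comp.const_mul ((1:ℂ)/2)).deriv
  -- exponentials
  have hWpos : (0:ℝ) < (3/2) * t ^ 2 + 1/2 := by positivity
  set W : ℝ := (3/2) * t ^ 2 + 1/2 with hWdef
  set L : ℝ := Real.log W with hLdef
  have hφval : φ ξ η = Complex.I * Real.pi / 2 + (1/2 : ℂ) * (L : ℂ) := by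
    rw [hφ]
  have hexp2 : Complex.exp (2 * φ ξ η) = -(W : ℂ) := by
    rw [hφval]
    have : (2:ℂ) * (Complex.I * Real.pi / 2 + (1/2 : ℂ) * (L : ℂ)) =
        Real.pi * Complex.I + (L : ℂ) := by ring
    rw [this, Complex.exp_add, Complex.exp_pi_mul_I, ← Complex.ofReal_exp,
      Real.exp_log hWpos]
    ring
  have hexp4 : Complex.exp (-4 * φ ξ η) = ((W ^ 2)⁻¹ : ℝ) := by
    rw [hφval]
    have : (-4:ℂ) * (Complex.I * Real.pi / 2 + (1/2 : ℂ) * (L : ℂ)) =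
        (-1 : ℤ) * (2 * Real.pi * Complex.I) + (-(2 * L) : ℝ) := by push_cast; ring
    rw [this, Complex.exp_add, Complex.exp_int_mul_two_pi_mul_I, ← Complex.ofReal_exp,
      one_mul]
    congr 1
    rw [Real.exp_neg, two_mul, Real.exp_add, Real.exp_log hWpos, sq]
  have hWne : W ≠ 0 := ne_of_gt hWpos
  have hX : (3 * c2) * (1 + t ^ 2) * (1 + 3 * t ^ 2) * c1 * W -
      (3 * c2) * t * (1 + t ^ 2) * (3 * t * (1 + t ^ 2) * c1) = W ^ 3 + 1 := by
    rw [hWdef]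
    linear_combination ((3:ℝ)/2 * (1 + t ^ 2) * (1 + 3 * t ^ 4)) * hcc
  have hre : ((3 * c2) * (1 + t ^ 2) * (1 + 3 * t ^ 2) * c1 * W -
      (3 * c2) * t * (1 + t ^ 2) * (3 * t * (1 + t ^ 2) * c1)) / W ^ 2
      = W + (W ^ 2)⁻¹ := by
    rw [hX]
    field_simp
  rw [hmix2, hexp2, hexp4, hre, Complex.ofReal_add, Complex.ofReal_inv,
    Complex.ofReal_pow]
  ring
end

section
/- Let ρ ≠ 0 and α be real numbers and define Θ(ξ,η) = (√3/2)(ρξ + η/ρ) − α. Then on the open set where cos Θ ≠ 0, the real-valued function ψ(ξ,η) = (1/2)·ln[(3/2)·tan²Θ + 1/2] satisfies the T4 Tzitzeica equation: 2 ∂²ψ/∂ξ∂η = e^{2ψ} + e^{−4ψ}. -/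
open Real Filter

/-- Derivative of the auxiliary function `θ ↦ 3 sin θ / (cos θ (2 sin² θ + 1))`. -/
lemma hasDerivAt_aux (θ D : ℝ) (h : Real.cos θ ≠ 0)
    (hD : D = (3 * Real.cos θ * (Real.cos θ * (2 * Real.sin θ ^ 2 + 1)) -
        3 * Real.sin θ * (-Real.sin θ * (2 * Real.sin θ ^ 2 + 1) +
          Real.cos θ * (4 * Real.sin θ * Real.cos θ)))
        / (Real.cos θ * (2 * Real.sin θ ^ 2 + 1)) ^ 2) :
    HasDerivAt (fun t => 3 * Real.sin t / (Real.cos t * (2 * Real.sin t ^ 2 + 1))) D θ := by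
  have hnum : HasDerivAt (fun t => 3 * Real.sin t) (3 * Real.cos θ) θ :=
    (Real.hasDerivAt_sin θ).const_mul 3
  have h2 : HasDerivAt (fun t => 2 * Real.sin t ^ 2 + 1)
      (2 * (2 * Real.sin θ * Real.cos θ)) θ := by
    have := ((Real.hasDerivAt_sin θ).pow 2).const_mul 2
    simpa using this.add_const 1
  have hden := (Real.hasDerivAt_cos θ).mul h2
  have hne : Real.cos θ * (2 * Real.sin θ ^ 2 + 1) ≠ 0 := by positivity
  have := hnum.div hden hne
  refine this.congr_deriv (Eq.symm ?_)
  rw [hD]; simp only [Pi.mul_apply]; ring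

/-- Derivative of `y ↦ (1/2) log((3/2) tan(T y)² + 1/2)` where `T` has derivative `e`. -/
lemma hasDerivAt_psi (e : ℝ) (T : ℝ → ℝ) (y : ℝ) (hT : HasDerivAt T e y)
    (h : Real.cos (T y) ≠ 0) :
    HasDerivAt (fun y' => (1/2 : ℝ) * Real.log ((3/2) * Real.tan (T y') ^ 2 + 1/2))
      (e * (3 * Real.sin (T y) / (Real.cos (T y) * (2 * Real.sin (T y) ^ 2 + 1)))) y := by
  have htan : HasDerivAt (fun y' => Real.tan (T y')) (1 / Real.cos (T y) ^ 2 * e) y :=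
    (Real.hasDerivAt_tan h).comp y hT
  have hsq := htan.pow 2
  have hP : (3/2 : ℝ) * Real.tan (T y) ^ 2 + 1/2 > 0 := by positivity
  have hlin : HasDerivAt (fun y' => (3/2 : ℝ) * Real.tan (T y') ^ 2 + 1/2)
      ((3/2 : ℝ) * (2 * Real.tan (T y) ^ 1 * (1 / Real.cos (T y) ^ 2 * e))) y :=
    (hsq.const_mul (3/2)).add_const (1/2)
  have hlog := (hlin.log hP.ne').const_mul (1/2 : ℝ)
  refine hlog.congr_deriv (Eq.symm ?_)
  rw [Real.tan_eq_sin_div_cos]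
  have hpy : Real.sin (T y) ^ 2 + Real.cos (T y) ^ 2 = 1 := Real.sin_sq_add_cos_sq _
  have hne : 2 * Real.sin (T y) ^ 2 + 1 ≠ 0 := by positivity
  field_simp
  linear_combination (e * Real.sin (T y)) * hpy

/-- Algebraic core of the T4 equation. -/
lemma key_alg (s k : ℝ) (hk : k ≠ 0) (hpy : s^2+k^2=1) :
    2 * (3/4 * ((3*k*(k*(2*s^2+1)) - 3*s*(-s*(2*s^2+1)+k*(4*s*k)))/(k*(2*s^2+1))^2))
    = (3/2*(s/k)^2+1/2) + ((3/2*(s/k)^2+1/2)*(3/2*(s/k)^2+1/2))⁻¹ := by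
  have hne : 2*s^2+1 ≠ 0 := by positivity
  have hP : (3/2*(s/k)^2+1/2) ≠ 0 := by positivity
  field_simp
  ring_nf
  linear_combination ((-144)*k^4*s^4 + (-216)*k^4*s^2 + (-432)*k^2*s^4 + (-432)*k^0*s^8 + (-216)*k^0*s^6) * hpy

set_option maxHeartbeats 1000000 in
/-- With `Θ = (√3/2)(ρξ + η/ρ) - α`, on the set where `cos Θ ≠ 0` the function
`ψ = (1/2)·ln[(3/2)tan²Θ + 1/2]` satisfies the T4 Tzitzeica equation
`2 ψ_{ξη} = e^{2ψ} + e^{-4ψ}`. -/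
theorem stmt_14 (ρ α : ℝ) (hρ : ρ ≠ 0)
    (Θ : ℝ → ℝ → ℝ)
    (hΘ : ∀ ξ η : ℝ, Θ ξ η = (Real.sqrt 3 / 2) * (ρ * ξ + η / ρ) - α)
    (ψ : ℝ → ℝ → ℝ)
    (hψ : ∀ ξ η : ℝ, ψ ξ η =
      (1 / 2) * Real.log ((3 / 2) * Real.tan (Θ ξ η) ^ 2 + 1 / 2)) :
    ∀ ξ η : ℝ, Real.cos (Θ ξ η) ≠ 0 →
      2 * mixedDeriv ψ ξ η = Real.exp (2 * ψ ξ η) + Real.exp (-4 * ψ ξ η) := by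
  intro ξ η h0
  set c : ℝ := Real.sqrt 3 / 2 with hc
  have hcsq : c ^ 2 = 3 / 4 := by
    rw [hc, div_pow, Real.sq_sqrt (by norm_num : (3:ℝ) ≥ 0)]; norm_num
  -- derivatives of Θ in each variable
  have hΘy : ∀ x y : ℝ, HasDerivAt (fun y' => Θ x y') (c * (1/ρ)) y := by
    intro x y
    have h1 : HasDerivAt (fun y' : ℝ => c * (ρ * x + y' / ρ) - α) (c * (1/ρ)) y :=
      ((((hasDerivAt_id y).div_const ρ).const_add (ρ * x)).const_mul c).sub_const α
    exact h1.congr_of_eventuallyEq (Filter.Eventually.of_forall fun y' => by simp only [hΘ])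
  have hΘx : ∀ x y : ℝ, HasDerivAt (fun x' => Θ x' y) (c * ρ) x := by
    intro x y
    have h1 : HasDerivAt (fun x' : ℝ => c * (ρ * x' + y / ρ) - α) (c * ρ) x := by
      have := (((hasDerivAt_id x).const_mul ρ).add_const (y / ρ)).const_mul c |>.sub_const α
      exact this.congr_deriv (by ring)
    exact h1.congr_of_eventuallyEq (Filter.Eventually.of_forall fun x' => by simp only [hΘ])
  -- inner derivative formula
  have inner : ∀ x y : ℝ, Real.cos (Θ x y) ≠ 0 →
      deriv (fun y' => ψ x y') y =
        c * (1/ρ) * (3 * Real.sin (Θ x y) /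
          (Real.cos (Θ x y) * (2 * Real.sin (Θ x y) ^ 2 + 1))) := by
    intro x y hx
    have h1 := hasDerivAt_psi (c * (1/ρ)) (fun y' => Θ x y') y (hΘy x y) hx
    have h2 : (fun y' => ψ x y') =
        (fun y' => (1/2 : ℝ) * Real.log ((3/2) * Real.tan (Θ x y') ^ 2 + 1/2)) := by
      funext y'; rw [hψ]
    rw [h2]
    exact h1.deriv
  -- the functions agree near ξ
  have hcont : Continuous (fun x => Real.cos (Θ x η)) := by
    have : (fun x => Θ x η) = (fun x => c * (ρ * x + η / ρ) - α) := by
      funext x; rw [hΘ]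
    exact Real.continuous_cos.comp (by rw [this]; continuity)
  have hev : ∀ᶠ x in nhds ξ, Real.cos (Θ x η) ≠ 0 :=
    hcont.continuousAt.eventually_ne h0
  have heq : (fun x => deriv (fun y => ψ x y) η) =ᶠ[nhds ξ]
      (fun x => c * (1/ρ) * (3 * Real.sin (Θ x η) /
        (Real.cos (Θ x η) * (2 * Real.sin (Θ x η) ^ 2 + 1)))) :=
    hev.mono fun x hx => inner x η hx
  -- outer derivative
  set θ := Θ ξ η with hθ
  set s := Real.sin θ with hs
  set k := Real.cos θ with hk
  set D : ℝ := (3 * k * (k * (2 * s ^ 2 + 1)) -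
      3 * s * (-s * (2 * s ^ 2 + 1) + k * (4 * s * k))) / (k * (2 * s ^ 2 + 1)) ^ 2 with hD
  have houter : HasDerivAt (fun x => c * (1/ρ) * (3 * Real.sin (Θ x η) /
      (Real.cos (Θ x η) * (2 * Real.sin (Θ x η) ^ 2 + 1))))
      (c * (1/ρ) * (D * (c * ρ))) ξ := by
    have hH := hasDerivAt_aux θ D h0 hD
    exact ((hH.comp ξ (hΘx ξ η))).const_mul _
  have hmix : mixedDeriv ψ ξ η = c * (1/ρ) * (D * (c * ρ)) := by
    unfold mixedDeriv
    rw [heq.deriv_eq]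
    exact houter.deriv
  rw [hmix, hψ ξ η]
  rw [← hθ]
  -- handle the exponentials
  set P : ℝ := (3/2) * Real.tan θ ^ 2 + 1/2 with hP
  have hPpos : 0 < P := by rw [hP]; positivity
  have he1 : Real.exp (2 * ((1:ℝ)/2 * Real.log P)) = P := by
    rw [show (2 : ℝ) * ((1:ℝ)/2 * Real.log P) = Real.log P by ring, Real.exp_log hPpos]
  have he2 : Real.exp (-4 * ((1:ℝ)/2 * Real.log P)) = (P * P)⁻¹ := by
    rw [show (-4 : ℝ) * ((1:ℝ)/2 * Real.log P) = -(Real.log P + Real.log P) by ring,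
      Real.exp_neg, Real.exp_add, Real.exp_log hPpos]
  rw [he1, he2, hP, hD, Real.tan_eq_sin_div_cos, ← hs, ← hk]
  have hpy : s ^ 2 + k ^ 2 = 1 := Real.sin_sq_add_cos_sq θ
  have hk0 : k ≠ 0 := h0
  have hne : 2 * s ^ 2 + 1 ≠ 0 := by positivity
  have hc0 : c * (1/ρ) * (D * (c * ρ)) = (3/4) * D := by
    rw [show c * (1/ρ) * (D * (c * ρ)) = c^2 * D * (ρ/ρ) by ring, div_self hρ, hcsq]; ring
  rw [hc0]
  exact key_alg s k hk0 hpy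
end

section
/- Let ρ ≠ 0 and α be real numbers and define Θ(ξ,η) = (√3/2)(ρξ + η/ρ) − α. Then on the open set where sin Θ ≠ 0, the real-valued function ψ(ξ,η) = (1/2)·ln[(3/2)·cot²Θ + 1/2] satisfies the T4 Tzitzeica equation: 2 ∂²ψ/∂ξ∂η = e^{2ψ} + e^{−4ψ}. This solution is singular and blows up along the lines where sin Θ = 0. -/
noncomputable def gT4 (t : ℝ) : ℝ :=
  (1/2)*(Real.log (3 - 2*Real.sin t^2) - Real.log (2*Real.sin t^2))

noncomputable def g1T4 (t : ℝ) : ℝ :=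
  -3*Real.cos t/(Real.sin t*(3-2*Real.sin t^2))

noncomputable def g2T4 (t : ℝ) : ℝ :=
  3*(3-6*Real.sin t^2+4*Real.sin t^4)/(Real.sin t^2*(3-2*Real.sin t^2)^2)

lemma den_pos (t : ℝ) : 0 < 3 - 2*Real.sin t^2 := by
  nlinarith [Real.sin_sq_le_one t]

lemma T4aux1 (t : ℝ) (h : Real.sin t ≠ 0) : HasDerivAt gT4 (g1T4 t) t := by
  have h1 : 3 - 2*Real.sin t^2 ≠ 0 := (den_pos t).ne'
  have h2 : 2*Real.sin t^2 ≠ 0 := by positivity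
  have ds : HasDerivAt (fun u => Real.sin u ^ 2) (2*Real.sin t * Real.cos t) t := by
    have := (Real.hasDerivAt_sin t).pow 2
    exact this.congr_deriv (by simp)
  have d1 : HasDerivAt (fun u => 3 - 2*Real.sin u^2) (-(2*(2*Real.sin t*Real.cos t))) t :=
    ((ds.const_mul 2).const_sub 3).congr_deriv (by ring)
  have d2 : HasDerivAt (fun u => 2*Real.sin u^2) (2*(2*Real.sin t*Real.cos t)) t :=
    ds.const_mul 2
  have := ((d1.log h1).sub (d2.log h2)).const_mul (1/2)
  refine this.congr_deriv ?_
  unfold g1T4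
  field_simp
  ring

lemma T4aux2 (t : ℝ) (h : Real.sin t ≠ 0) : HasDerivAt g1T4 (g2T4 t) t := by
  have h1 : 3 - 2*Real.sin t^2 ≠ 0 := (den_pos t).ne'
  have hd : Real.sin t*(3-2*Real.sin t^2) ≠ 0 := mul_ne_zero h h1
  have ds : HasDerivAt (fun u => Real.sin u ^ 2) (2*Real.sin t * Real.cos t) t := by
    have := (Real.hasDerivAt_sin t).pow 2
    exact this.congr_deriv (by simp)
  have dnum : HasDerivAt (fun u => -3*Real.cos u) (-3*(-Real.sin t)) t :=
    (Real.hasDerivAt_cos t).const_mul (-3)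
  have dden : HasDerivAt (fun u => Real.sin u*(3-2*Real.sin u^2))
      (Real.cos t*(3-2*Real.sin t^2) + Real.sin t*(-(2*(2*Real.sin t*Real.cos t)))) t :=
    (Real.hasDerivAt_sin t).mul (((ds.const_mul 2).const_sub 3).congr_deriv (by ring))
  have := dnum.div dden hd
  refine this.congr_deriv ?_
  unfold g2T4
  have hc : Real.cos t ^ 2 = 1 - Real.sin t ^ 2 := by
    nlinarith [Real.sin_sq_add_cos_sq t]
  field_simp
  congr 1; linear_combination (3 - 6*Real.sin t^2) * hc

lemma T4val (t : ℝ) (h : Real.sin t ≠ 0) :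
    (3/2) * Real.cot t ^ 2 + 1/2 = (3 - 2*Real.sin t^2)/(2*Real.sin t^2) := by
  have hc : Real.cos t ^ 2 = 1 - Real.sin t ^ 2 := by
    nlinarith [Real.sin_sq_add_cos_sq t]
  rw [Real.cot_eq_cos_div_sin]
  field_simp
  linear_combination 3 * hc

lemma T4eq (t : ℝ) (h : Real.sin t ≠ 0) :
    (1/2) * Real.log ((3/2) * Real.cot t ^ 2 + 1/2) = gT4 t := by
  have h1 : 3 - 2*Real.sin t^2 ≠ 0 := (den_pos t).ne'
  have h2 : 2*Real.sin t^2 ≠ 0 := by positivity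
  rw [T4val t h, gT4, Real.log_div h1 h2]

/-- With `Θ = (√3/2)(ρξ + η/ρ) - α`, on the set where `sin Θ ≠ 0` the function
`ψ = (1/2)·ln[(3/2)cot²Θ + 1/2]` satisfies the T4 Tzitzeica equation
`2 ψ_{ξη} = e^{2ψ} + e^{-4ψ}`. -/
theorem stmt_15 (ρ α : ℝ) (hρ : ρ ≠ 0)
    (Θ : ℝ → ℝ → ℝ)
    (hΘ : ∀ ξ η : ℝ, Θ ξ η = (Real.sqrt 3 / 2) * (ρ * ξ + η / ρ) - α)
    (ψ : ℝ → ℝ → ℝ)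
    (hψ : ∀ ξ η : ℝ, ψ ξ η =
      (1 / 2) * Real.log ((3 / 2) * Real.cot (Θ ξ η) ^ 2 + 1 / 2)) :
    ∀ ξ η : ℝ, Real.sin (Θ ξ η) ≠ 0 →
      2 * mixedDeriv ψ ξ η = Real.exp (2 * ψ ξ η) + Real.exp (-4 * ψ ξ η) := by
  intro ξ η hξη
  set c : ℝ := Real.sqrt 3 / 2 with hc
  have hΘy : ∀ x y : ℝ, HasDerivAt (fun y => Θ x y) (c * (1/ρ)) y := by
    intro x y
    have : HasDerivAt (fun y : ℝ => c * (ρ * x + y / ρ) - α) (c * (1/ρ)) y := by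
      have h0 : HasDerivAt (fun y : ℝ => y / ρ) (1/ρ) y := by
        simpa using (hasDerivAt_id y).div_const ρ
      exact (((h0.const_add (ρ * x)).const_mul c).sub_const α).congr_deriv (by ring)
    exact this.congr_of_eventuallyEq (by filter_upwards with y using (hΘ x y))
  have hΘx : ∀ x : ℝ, HasDerivAt (fun x => Θ x η) (c * ρ) x := by
    intro x
    have : HasDerivAt (fun x : ℝ => c * (ρ * x + η / ρ) - α) (c * ρ) x := by
      have h0 : HasDerivAt (fun x : ℝ => ρ * x) ρ x := by
        simpa using (hasDerivAt_id x).const_mul ρ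
      exact (((h0.add_const (η / ρ)).const_mul c).sub_const α).congr_deriv (by ring)
    exact this.congr_of_eventuallyEq (by filter_upwards with x using (hΘ x η))
  have hinner : ∀ x : ℝ, Real.sin (Θ x η) ≠ 0 →
      deriv (fun y => ψ x y) η = g1T4 (Θ x η) * (c * (1/ρ)) := by
    intro x hx
    have hc1 : Continuous fun y => Θ x y := by
      have : (fun y => Θ x y) = fun y => c * (ρ * x + y / ρ) - α :=
        funext fun y => hΘ x y
      rw [this]; fun_prop
    have hopen : IsOpen {y | Real.sin (Θ x y) ≠ 0} :=
      isOpen_compl_singleton.preimage (Real.continuous_sin.comp hc1)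
    have hev : (fun y => ψ x y) =ᶠ[nhds η] fun y => gT4 (Θ x y) := by
      filter_upwards [hopen.mem_nhds hx] with y hy
      rw [hψ x y, T4eq _ hy]
    have hD : HasDerivAt (fun y => gT4 (Θ x y)) (g1T4 (Θ x η) * (c * (1/ρ))) η :=
      (T4aux1 _ hx).comp η (hΘy x η)
    exact (hD.congr_of_eventuallyEq hev).deriv
  have hc2 : Continuous fun x => Θ x η := by
    have : (fun x => Θ x η) = fun x => c * (ρ * x + η / ρ) - α :=
      funext fun x => hΘ x η
    rw [this]; fun_prop
  have hopenx : IsOpen {x | Real.sin (Θ x η) ≠ 0} :=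
    isOpen_compl_singleton.preimage (Real.continuous_sin.comp hc2)
  have hevx : (fun x => deriv (fun y => ψ x y) η) =ᶠ[nhds ξ]
      fun x => g1T4 (Θ x η) * (c * (1/ρ)) := by
    filter_upwards [hopenx.mem_nhds hξη] with x hx using hinner x hx
  have hD2 : HasDerivAt (fun x => g1T4 (Θ x η) * (c * (1/ρ)))
      (g2T4 (Θ ξ η) * (c * ρ) * (c * (1/ρ))) ξ :=
    ((T4aux2 _ hξη).comp ξ (hΘx ξ)).mul_const _
  have hmix : mixedDeriv ψ ξ η = g2T4 (Θ ξ η) * (c * ρ) * (c * (1/ρ))  := by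
    rw [mixedDeriv, hevx.deriv_eq]
    exact hD2.deriv
  have h3 : Real.sqrt 3 * Real.sqrt 3 = 3 := Real.mul_self_sqrt (by norm_num)
  have hcc : g2T4 (Θ ξ η) * (c * ρ) * (c * (1/ρ)) = g2T4 (Θ ξ η) * (3/4) := by
    rw [hc]; field_simp; linear_combination (4*g2T4 (Θ ξ η)) * h3
  set t := Θ ξ η
  set s := Real.sin t with hs
  have h1 : (0:ℝ) < 3 - 2*s^2 := den_pos t
  have h2 : (0:ℝ) < 2*s^2 := by positivity
  have hA : (3/2) * Real.cot t ^ 2 + 1/2 = (3 - 2*s^2)/(2*s^2) := T4val t hξη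
  have hApos : (0:ℝ) < (3 - 2*s^2)/(2*s^2) := div_pos h1 h2
  have he1 : Real.exp (2 * ψ ξ η) = (3 - 2*s^2)/(2*s^2) := by
    rw [hψ, hA, show (2:ℝ) * ((1/2) * Real.log ((3 - 2*s^2)/(2*s^2)))
        = Real.log ((3 - 2*s^2)/(2*s^2)) from by ring]
    exact Real.exp_log hApos
  have he2 : Real.exp (-4 * ψ ξ η) = (((3 - 2*s^2)/(2*s^2))^2)⁻¹ := by
    rw [hψ, hA, show (-4:ℝ) * ((1/2) * Real.log ((3 - 2*s^2)/(2*s^2)))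
        = Real.log ((((3 - 2*s^2)/(2*s^2))^2)⁻¹) from by
      rw [Real.log_inv, Real.log_pow]; push_cast; ring]
    exact Real.exp_log (by positivity)
  rw [hmix, hcc, he1, he2, g2T4, ← hs]
  field_simp
  ring
end

section
/- Let ρ ≠ 0 and α be real numbers and define Θ(ξ,η) = (√3/2)(ρξ − η/ρ) − α. Then on the open set where tanh²Θ > 1/3, the real-valued function φ(ξ,η) = (1/2)·ln[(3/2)·tanh²Θ − 1/2] satisfies the T2 Tzitzeica equation: 2 ∂²φ/∂ξ∂η = −(e^{2φ} − e^{−4φ}). This 'quasi-regular' solution is singular only on the two lines where tanh Θ = ±1/√3. -/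
lemma continuous_tanh' : Continuous Real.tanh := by
  have h : Real.tanh = fun x => Real.sinh x / Real.cosh x :=
    funext Real.tanh_eq_sinh_div_cosh
  rw [h]
  exact Real.continuous_sinh.div Real.continuous_cosh fun x => (Real.cosh_pos x).ne'

lemma hasDerivAt_tanh' (x : ℝ) :
    HasDerivAt Real.tanh (1 - Real.tanh x ^ 2) x := by
  have hc : Real.cosh x ≠ 0 := (Real.cosh_pos x).ne'
  have h : HasDerivAt (fun y => Real.sinh y / Real.cosh y)
      ((Real.cosh x * Real.cosh x - Real.sinh x * Real.sinh x) / Real.cosh x ^ 2) x :=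
    (Real.hasDerivAt_sinh x).div (Real.hasDerivAt_cosh x) hc
  have h2 : (Real.cosh x * Real.cosh x - Real.sinh x * Real.sinh x) / Real.cosh x ^ 2
      = 1 - Real.tanh x ^ 2 := by
    rw [Real.tanh_eq_sinh_div_cosh]
    have := Real.cosh_sq_sub_sinh_sq x
    field_simp
  rw [h2] at h
  exact h.congr_of_eventuallyEq (Filter.Eventually.of_forall fun y =>
    (Real.tanh_eq_sinh_div_cosh y))

/-- With `Θ = (√3/2)(ρξ - η/ρ) - α`, on the set where `tanh²Θ > 1/3` the
quasi-regular soliton `φ = (1/2)·ln[(3/2)tanh²Θ - 1/2]` satisfies the T2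
Tzitzeica equation `2 φ_{ξη} = -(e^{2φ} - e^{-4φ})`. -/
theorem stmt_16 (ρ α : ℝ) (hρ : ρ ≠ 0)
    (Θ : ℝ → ℝ → ℝ)
    (hΘ : ∀ ξ η : ℝ, Θ ξ η = (Real.sqrt 3 / 2) * (ρ * ξ - η / ρ) - α)
    (φ : ℝ → ℝ → ℝ)
    (hφ : ∀ ξ η : ℝ, φ ξ η =
      (1 / 2) * Real.log ((3 / 2) * Real.tanh (Θ ξ η) ^ 2 - 1 / 2)) :
    ∀ ξ η : ℝ, Real.tanh (Θ ξ η) ^ 2 > 1 / 3 →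
      2 * mixedDeriv φ ξ η = -(Real.exp (2 * φ ξ η) - Real.exp (-4 * φ ξ η)) := by
  intro ξ η ht
  set s : ℝ := Real.sqrt 3 with hs
  have hs2 : s ^ 2 = 3 := Real.sq_sqrt (by norm_num)
  -- coefficients
  set a : ℝ := s / 2 * ρ with ha
  set c : ℝ := -(s / 2 / ρ) with hc
  have hac : a * c = -(3 / 4) := by
    have h1 : a * c = -(s ^ 2) / 4 := by
      rw [ha, hc]; field_simp; ring
    rw [h1, hs2]; norm_num
  -- Θ as affine function
  have hΘx : ∀ x y : ℝ, Θ x y = a * x + (c * y - α) := by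
    intro x y
    rw [hΘ x y]
    field_simp [ha, hc]
    rw [ha, hc]; field_simp; ring
  -- g : the inner-derivative profile (w.r.t. Θ), times nothing
  set g : ℝ → ℝ := fun θ =>
    3 * Real.tanh θ * (1 - Real.tanh θ ^ 2) / (3 * Real.tanh θ ^ 2 - 1) with hg
  -- inner derivative formula
  have hinner : ∀ x : ℝ, 1 / 3 < Real.tanh (Θ x η) ^ 2 →
      deriv (fun y => φ x y) η = c * g (Θ x η) := by
    intro x hx
    have hD : (3 : ℝ) / 2 * Real.tanh (Θ x η) ^ 2 - 1 / 2 ≠ 0 := by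
      nlinarith [hx]
    have hΘd : HasDerivAt (fun y => Θ x y) c η := by
      have : HasDerivAt (fun y : ℝ => a * x + (c * y - α)) c η := by
        simpa using (((hasDerivAt_id η).const_mul c).sub_const α).const_add (a * x)
      exact this.congr_of_eventuallyEq (Filter.Eventually.of_forall fun y => (hΘx x y))
    have htanh : HasDerivAt (fun y => Real.tanh (Θ x y))
        ((1 - Real.tanh (Θ x η) ^ 2) * c) η :=
      (hasDerivAt_tanh' (Θ x η)).comp η hΘd
    have hP : HasDerivAt (fun y => (3 : ℝ) / 2 * Real.tanh (Θ x y) ^ 2 - 1 / 2)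
        (3 / 2 * (2 * Real.tanh (Θ x η) * ((1 - Real.tanh (Θ x η) ^ 2) * c))) η := by
      simpa using (((htanh.pow 2).const_mul ((3:ℝ)/2)).sub_const ((1:ℝ)/2))
    have hlog := (hP.log hD).const_mul ((1:ℝ)/2)
    have hφd : HasDerivAt (fun y => φ x y)
        (1 / 2 * (3 / 2 * (2 * Real.tanh (Θ x η) * ((1 - Real.tanh (Θ x η) ^ 2) * c)) /
          (3 / 2 * Real.tanh (Θ x η) ^ 2 - 1 / 2))) η :=
      hlog.congr_of_eventuallyEq (Filter.Eventually.of_forall fun y => (hφ x y))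
    rw [hφd.deriv, hg]
    have hD' : (3 : ℝ) * Real.tanh (Θ x η) ^ 2 - 1 ≠ 0 := by
      intro h; apply hD; linarith
    field_simp
  -- eventual equality near ξ
  have hcont : ContinuousAt (fun x => Real.tanh (Θ x η) ^ 2) ξ := by
    have hfun : (fun x => Real.tanh (Θ x η) ^ 2)
        = fun x => Real.tanh (a * x + (c * η - α)) ^ 2 :=
      funext fun x => by rw [hΘx]
    rw [hfun]
    exact ((continuous_tanh'.comp
      ((continuous_const.mul continuous_id).add continuous_const)).pow 2).continuousAt
  have hev : ∀ᶠ x in nhds ξ, (1 : ℝ) / 3 < Real.tanh (Θ x η) ^ 2 :=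
    (continuousAt_const.eventually_lt hcont ht)
  have heq : (fun x => deriv (fun y => φ x y) η) =ᶠ[nhds ξ]
      (fun x => c * g (Θ x η)) :=
    hev.mono fun x hx => hinner x hx
  -- outer derivative
  set t : ℝ := Real.tanh (Θ ξ η) with htdef
  have hD : (3 : ℝ) * t ^ 2 - 1 ≠ 0 := by nlinarith [ht]
  have hΘdx : HasDerivAt (fun x => Θ x η) a ξ := by
    have : HasDerivAt (fun x : ℝ => a * x + (c * η - α)) a ξ := by
      simpa using ((hasDerivAt_id ξ).const_mul a).add_const (c * η - α)
    exact this.congr_of_eventuallyEq (Filter.Eventually.of_forall fun x => (hΘx x η))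
  have htanh : HasDerivAt (fun x => Real.tanh (Θ x η)) ((1 - t ^ 2) * a) ξ :=
    by have h := (hasDerivAt_tanh' (Θ ξ η)).comp ξ hΘdx; exact h
  -- N = 3 tanh (1 - tanh²), D = 3 tanh² - 1
  have hN : HasDerivAt (fun x => 3 * Real.tanh (Θ x η) * (1 - Real.tanh (Θ x η) ^ 2))
      (3 * ((1 - t ^ 2) * a) * (1 - t ^ 2) + 3 * t * (-(2 * t * ((1 - t ^ 2) * a)))) ξ := by
    have h1 : HasDerivAt (fun x => 3 * Real.tanh (Θ x η)) (3 * ((1 - t ^ 2) * a)) ξ := by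
      simpa [mul_comm] using htanh.const_mul 3
    have h2 : HasDerivAt (fun x => 1 - Real.tanh (Θ x η) ^ 2)
        (-(2 * t * ((1 - t ^ 2) * a))) ξ := by
      simpa using (htanh.pow 2).const_sub 1
    simpa [← htdef, Pi.mul_def] using h1.mul h2
  have hDd : HasDerivAt (fun x => 3 * Real.tanh (Θ x η) ^ 2 - 1)
      (3 * (2 * t * ((1 - t ^ 2) * a))) ξ := by
    simpa using ((htanh.pow 2).const_mul 3).sub_const 1
  have hgd : HasDerivAt (fun x => c * g (Θ x η))
      (c * (((3 * ((1 - t ^ 2) * a) * (1 - t ^ 2) + 3 * t * (-(2 * t * ((1 - t ^ 2) * a)))) *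
          (3 * t ^ 2 - 1) -
        3 * t * (1 - t ^ 2) * (3 * (2 * t * ((1 - t ^ 2) * a)))) /
        (3 * t ^ 2 - 1) ^ 2)) ξ := by
    exact ((hN.div hDd hD).const_mul c)
  have hmix : mixedDeriv φ ξ η =
      c * (((3 * ((1 - t ^ 2) * a) * (1 - t ^ 2) + 3 * t * (-(2 * t * ((1 - t ^ 2) * a)))) *
          (3 * t ^ 2 - 1) -
        3 * t * (1 - t ^ 2) * (3 * (2 * t * ((1 - t ^ 2) * a)))) /
        (3 * t ^ 2 - 1) ^ 2) := by
    rw [mixedDeriv, heq.deriv_eq, hgd.deriv]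
  -- right-hand side
  have hPpos : (0 : ℝ) < 3 / 2 * t ^ 2 - 1 / 2 := by nlinarith [ht]
  have he1 : Real.exp (2 * φ ξ η) = 3 / 2 * t ^ 2 - 1 / 2 := by
    rw [hφ ξ η, ← htdef]
    rw [show 2 * (1 / 2 * Real.log (3 / 2 * t ^ 2 - 1 / 2)) =
      Real.log (3 / 2 * t ^ 2 - 1 / 2) by ring]
    exact Real.exp_log hPpos
  have he2 : Real.exp (-4 * φ ξ η) = (3 / 2 * t ^ 2 - 1 / 2)⁻¹ ^ 2 := by
    rw [hφ ξ η, ← htdef]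
    have hlg : (-4 : ℝ) * (1 / 2 * Real.log (3 / 2 * t ^ 2 - 1 / 2)) =
        Real.log ((3 / 2 * t ^ 2 - 1 / 2)⁻¹ ^ 2) := by
      rw [Real.log_pow, Real.log_inv]; push_cast; ring
    rw [hlg, Real.exp_log (by positivity)]
  rw [hmix, he1, he2]
  have hP0 : (3 : ℝ) / 2 * t ^ 2 - 1 / 2 ≠ 0 := ne_of_gt hPpos
  have hX : ((3 * ((1 - t ^ 2) * a) * (1 - t ^ 2) + 3 * t * (-(2 * t * ((1 - t ^ 2) * a)))) *
          (3 * t ^ 2 - 1) -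
        3 * t * (1 - t ^ 2) * (3 * (2 * t * ((1 - t ^ 2) * a))))
      = a * (-3 * (1 - t ^ 2) * (3 * t ^ 4 + 1)) := by ring
  rw [hX]
  have hstep : 2 * (c * (a * (-3 * (1 - t ^ 2) * (3 * t ^ 4 + 1)) / (3 * t ^ 2 - 1) ^ 2))
      = 2 * (a * c) * ((-3 * (1 - t ^ 2) * (3 * t ^ 4 + 1)) / (3 * t ^ 2 - 1) ^ 2) := by
    ring
  rw [hstep, hac]
  field_simp
  ring
end

section
/- Let ρ ≠ 0 and α be real numbers and define Θ(ξ,η) = (√3/2)(ρξ − η/ρ) − α. Then on the open set where sinh Θ ≠ 0, the real-valued function φ(ξ,η) = (1/2)·ln[(3/2)·coth²Θ − 1/2] satisfies the T2 Tzitzeica equation: 2 ∂²φ/∂ξ∂η = −(e^{2φ} − e^{−4φ}). -/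
/-- The hyperbolic cotangent `coth x = cosh x / sinh x`. -/
noncomputable def rcoth (x : ℝ) : ℝ := Real.cosh x / Real.sinh x

noncomputable def solG (t : ℝ) : ℝ :=
  -3 * Real.cosh t / (Real.sinh t * (2 * Real.sinh t ^ 2 + 3))

lemma den_ne (s : ℝ) : 2 * s ^ 2 + 3 ≠ 0 := by nlinarith [sq_nonneg s]

lemma g_eq (t : ℝ) (hs : Real.sinh t ≠ 0) :
    (3 / 2) * rcoth t ^ 2 - 1 / 2
      = (2 * Real.sinh t ^ 2 + 3) / (2 * Real.sinh t ^ 2) := by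
  have hc := Real.cosh_sq t
  rw [rcoth]
  field_simp
  nlinarith [hc]

lemma g_pos (t : ℝ) (hs : Real.sinh t ≠ 0) :
    0 < (3 / 2) * rcoth t ^ 2 - 1 / 2 := by
  rw [g_eq t hs]
  positivity

lemma hasDerivAt_F (t : ℝ) (hs : Real.sinh t ≠ 0) :
    HasDerivAt (fun t => (1 / 2) * Real.log ((3 / 2) * rcoth t ^ 2 - 1 / 2))
      (solG t) t := by
  have hc := Real.cosh_sq t
  have h1 : HasDerivAt rcoth
      ((Real.sinh t * Real.sinh t - Real.cosh t * Real.cosh t) / Real.sinh t ^ 2) t :=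
    (Real.hasDerivAt_cosh t).div (Real.hasDerivAt_sinh t) hs
  have h2 := (((h1.pow 2).const_mul (3/2 : ℝ)).sub_const (1/2 : ℝ))
  have hne : (3 / 2) * rcoth t ^ 2 - 1 / 2 ≠ 0 := (g_pos t hs).ne'
  have h3 := (h2.log hne).const_mul (1/2 : ℝ)
  refine HasDerivAt.congr_deriv h3 (Eq.symm ?_)
  rw [solG, Pi.pow_apply, g_eq t hs, rcoth]
  have h2s : (2 : ℝ) * Real.sinh t ^ 2 ≠ 0 := by positivity
  simp only [Nat.cast_ofNat, Nat.add_one_sub_one, pow_one]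
  field_simp
  ring_nf
  linear_combination hc

lemma hasDerivAt_G (t : ℝ) (hs : Real.sinh t ≠ 0) :
    HasDerivAt solG
      (3 * (4 * Real.sinh t ^ 4 + 6 * Real.sinh t ^ 2 + 3)
        / (Real.sinh t ^ 2 * (2 * Real.sinh t ^ 2 + 3) ^ 2)) t := by
  have hc := Real.cosh_sq t
  have hnum : HasDerivAt (fun x => -3 * Real.cosh x) (-3 * Real.sinh t) t :=
    (Real.hasDerivAt_cosh t).const_mul (-3)
  have hden : HasDerivAt (fun x => Real.sinh x * (2 * Real.sinh x ^ 2 + 3))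
      (Real.cosh t * (2 * Real.sinh t ^ 2 + 3)
        + Real.sinh t * (2 * (2 * Real.sinh t ^ 1 * Real.cosh t))) t := by
    exact (Real.hasDerivAt_sinh t).mul
      ((((Real.hasDerivAt_sinh t).pow 2).const_mul 2).add_const 3)
  have hdne : Real.sinh t * (2 * Real.sinh t ^ 2 + 3) ≠ 0 :=
    mul_ne_zero hs (den_ne _)
  have h := hnum.div hden hdne
  refine HasDerivAt.congr_deriv h (Eq.symm ?_)
  field_simp
  ring_nf
  linear_combination (-(6 * Real.sinh t ^ 2 + 3)) * hc

/-- With `Θ = (√3/2)(ρξ - η/ρ) - α`, on the set where `sinh Θ ≠ 0` the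
quasi-regular soliton `φ = (1/2)·ln[(3/2)coth²Θ - 1/2]` satisfies the T2
Tzitzeica equation `2 φ_{ξη} = -(e^{2φ} - e^{-4φ})`. -/
theorem stmt_17 (ρ α : ℝ) (hρ : ρ ≠ 0)
    (Θ : ℝ → ℝ → ℝ)
    (hΘ : ∀ ξ η : ℝ, Θ ξ η = (Real.sqrt 3 / 2) * (ρ * ξ - η / ρ) - α)
    (φ : ℝ → ℝ → ℝ)
    (hφ : ∀ ξ η : ℝ, φ ξ η =
      (1 / 2) * Real.log ((3 / 2) * rcoth (Θ ξ η) ^ 2 - 1 / 2)) :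
    ∀ ξ η : ℝ, Real.sinh (Θ ξ η) ≠ 0 →
      2 * mixedDeriv φ ξ η = -(Real.exp (2 * φ ξ η) - Real.exp (-4 * φ ξ η)) := by
  intro ξ η hs
  set b : ℝ := Real.sqrt 3 / 2 * -(1 / ρ) with hb
  set a : ℝ := Real.sqrt 3 / 2 * ρ with ha
  -- inner derivative
  have inner : ∀ x : ℝ, Real.sinh (Θ x η) ≠ 0 →
      deriv (fun y => φ x y) η = solG (Θ x η) * b := by
    intro x hsx
    have hΘy : HasDerivAt (fun y => Θ x y) b η := by
      have : HasDerivAt (fun y : ℝ => Real.sqrt 3 / 2 * (ρ * x - y / ρ) - α)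
          (Real.sqrt 3 / 2 * -(1 / ρ)) η := by
        have h0 : HasDerivAt (fun y : ℝ => y / ρ) (1 / ρ) η := by
          simpa using (hasDerivAt_id η).div_const ρ
        exact ((h0.const_sub (ρ * x)).const_mul _).sub_const α
      exact this.congr_of_eventuallyEq (by filter_upwards with y; rw [hΘ])
    have hF := (hasDerivAt_F (Θ x η) hsx).comp η hΘy
    have hphi : HasDerivAt (fun y => φ x y) (solG (Θ x η) * b) η := by
      refine hF.congr_of_eventuallyEq ?_
      filter_upwards with y
      simp [hφ, Function.comp]
    exact hphi.deriv
  -- outer derivative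
  have hΘx : HasDerivAt (fun x => Θ x η) a ξ := by
    have : HasDerivAt (fun x : ℝ => Real.sqrt 3 / 2 * (ρ * x - η / ρ) - α)
        (Real.sqrt 3 / 2 * ρ) ξ := by
      have h0 : HasDerivAt (fun x : ℝ => ρ * x) ρ ξ := by
        simpa using (hasDerivAt_id ξ).const_mul ρ
      exact ((h0.sub_const (η / ρ)).const_mul _).sub_const α
    exact this.congr_of_eventuallyEq (by filter_upwards with x; rw [hΘ])
  have hH : HasDerivAt (fun x => solG (Θ x η) * b)
      ((3 * (4 * Real.sinh (Θ ξ η) ^ 4 + 6 * Real.sinh (Θ ξ η) ^ 2 + 3)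
        / (Real.sinh (Θ ξ η) ^ 2 * (2 * Real.sinh (Θ ξ η) ^ 2 + 3) ^ 2)) * a * b) ξ := by
    exact (((hasDerivAt_G (Θ ξ η) hs).comp ξ hΘx).mul_const b)
  have hev : (fun x => deriv (fun y => φ x y) η) =ᶠ[nhds ξ] (fun x => solG (Θ x η) * b) := by
    have hcont : ContinuousAt (fun x => Real.sinh (Θ x η)) ξ := by
      have : (fun x => Real.sinh (Θ x η))
          = fun x => Real.sinh (Real.sqrt 3 / 2 * (ρ * x - η / ρ) - α) := by
        funext x; rw [hΘ]
      rw [this]; fun_prop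
    filter_upwards [hcont.eventually_ne hs] with x hx
    exact inner x hx
  have hmix : HasDerivAt (fun x => deriv (fun y => φ x y) η)
      ((3 * (4 * Real.sinh (Θ ξ η) ^ 4 + 6 * Real.sinh (Θ ξ η) ^ 2 + 3)
        / (Real.sinh (Θ ξ η) ^ 2 * (2 * Real.sinh (Θ ξ η) ^ 2 + 3) ^ 2)) * a * b) ξ :=
    hH.congr_of_eventuallyEq hev
  have hmd : mixedDeriv φ ξ η
      = (3 * (4 * Real.sinh (Θ ξ η) ^ 4 + 6 * Real.sinh (Θ ξ η) ^ 2 + 3)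
        / (Real.sinh (Θ ξ η) ^ 2 * (2 * Real.sinh (Θ ξ η) ^ 2 + 3) ^ 2)) * a * b :=
    hmix.deriv
  have hab : a * b = -(3 / 4) := by
    have h3 : Real.sqrt 3 * Real.sqrt 3 = 3 := Real.mul_self_sqrt (by norm_num)
    rw [ha, hb]
    field_simp
    linear_combination (-4) * h3
  -- right hand side
  set s := Real.sinh (Θ ξ η) with hsdef
  have hgpos : (0:ℝ) < (2 * s ^ 2 + 3) / (2 * s ^ 2) := by positivity
  have hlog : φ ξ η = (1/2) * Real.log ((2 * s ^ 2 + 3) / (2 * s ^ 2)) := by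
    rw [hφ, g_eq _ hs]
  have he1 : Real.exp (2 * φ ξ η) = (2 * s ^ 2 + 3) / (2 * s ^ 2) := by
    rw [hlog, show (2:ℝ) * ((1/2) * Real.log ((2 * s ^ 2 + 3) / (2 * s ^ 2)))
      = Real.log ((2 * s ^ 2 + 3) / (2 * s ^ 2)) by ring, Real.exp_log hgpos]
  have he2 : Real.exp (-4 * φ ξ η)
      = ((2 * s ^ 2 + 3) / (2 * s ^ 2) * ((2 * s ^ 2 + 3) / (2 * s ^ 2)))⁻¹ := by
    rw [hlog, show (-4:ℝ) * ((1/2) * Real.log ((2 * s ^ 2 + 3) / (2 * s ^ 2)))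
      = -(Real.log ((2 * s ^ 2 + 3) / (2 * s ^ 2)) + Real.log ((2 * s ^ 2 + 3) / (2 * s ^ 2)))
      by ring, Real.exp_neg, Real.exp_add, Real.exp_log hgpos]
  rw [hmd, he1, he2, mul_assoc, hab]
  have hs2 : s ^ 2 ≠ 0 := pow_ne_zero 2 hs
  have hden := den_ne s
  field_simp
  ring
end

section
/- Let f, g : ℝ² → ℝ be twice continuously differentiable functions that are positive on an open set U and satisfy there the Hirota bilinear system (∂²g/∂ξ∂η)·g − (∂g/∂ξ)(∂g/∂η) − f² + g² = 0 and (∂²f/∂ξ∂η)·f − (∂f/∂ξ)(∂f/∂η) − fg + f² = 0. Then the function φ = (1/2)·ln(g/f) satisfies the T2 Tzitzeica equation 2 ∂²φ/∂ξ∂η = −(e^{2φ} − e^{−4φ}) on U. -/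
lemma aux_diffy (g : ℝ → ℝ → ℝ) (hg : ContDiff ℝ 2 (Function.uncurry g)) (x : ℝ) :
    Differentiable ℝ (fun y => g x y) :=
  (hg.differentiable (by norm_num)).comp ((differentiable_const x).prodMk differentiable_id)

lemma aux_diffx (g : ℝ → ℝ → ℝ) (hg : ContDiff ℝ 2 (Function.uncurry g)) (y : ℝ) :
    Differentiable ℝ (fun x => g x y) :=
  (hg.differentiable (by norm_num)).comp (differentiable_id.prodMk (differentiable_const y))

lemma aux_pdEta_eq (g : ℝ → ℝ → ℝ) (hg : ContDiff ℝ 2 (Function.uncurry g)) (x y : ℝ) :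
    pdEta g x y = fderiv ℝ (Function.uncurry g) (x, y) (0, 1) := by
  have h1 : HasFDerivAt (fun y' : ℝ => ((x, y') : ℝ × ℝ))
      (ContinuousLinearMap.inr ℝ ℝ ℝ) y :=
    HasFDerivAt.prodMk (hasFDerivAt_const x y) (hasFDerivAt_id y)
  have h2 := ((hg.differentiable (by norm_num)) (x, y)).hasFDerivAt.comp y h1
  have h3 := h2.hasDerivAt
  simp only [ContinuousLinearMap.coe_comp', Function.comp_apply,
    ContinuousLinearMap.inr_apply] at h3
  exact h3.deriv

lemma aux_pdEta_diff (g : ℝ → ℝ → ℝ) (hg : ContDiff ℝ 2 (Function.uncurry g)) (b : ℝ) :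
    Differentiable ℝ (fun x => pdEta g x b) := by
  have h2 : ContDiff ℝ 1 (fun x : ℝ => fderiv ℝ (Function.uncurry g) (x, b)) :=
    (hg.fderiv_right (by norm_num)).comp (contDiff_id.prodMk contDiff_const)
  have h3 : ContDiff ℝ 1 (fun x : ℝ => fderiv ℝ (Function.uncurry g) (x, b) (0, 1)) :=
    h2.clm_apply contDiff_const
  have : (fun x : ℝ => pdEta g x b) =
      fun x : ℝ => fderiv ℝ (Function.uncurry g) (x, b) (0, 1) := by
    funext x; exact aux_pdEta_eq g hg x b
  rw [this]
  exact h3.differentiable (by norm_num)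

/-- If `f, g` are C², positive on an open set `U` and satisfy the Hirota
bilinear system `g_{ξη}g - g_ξ g_η - f² + g² = 0`,
`f_{ξη}f - f_ξ f_η - fg + f² = 0` on `U`, then `φ = (1/2)·ln(g/f)` satisfies
the T2 Tzitzeica equation `2 φ_{ξη} = -(e^{2φ} - e^{-4φ})` on `U`. -/
theorem stmt_18 (U : Set (ℝ × ℝ)) (hU : IsOpen U) (f g : ℝ → ℝ → ℝ)
    (hf : ContDiff ℝ 2 (Function.uncurry f))
    (hg : ContDiff ℝ 2 (Function.uncurry g))
    (hfpos : ∀ p ∈ U, 0 < f p.1 p.2)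
    (hgpos : ∀ p ∈ U, 0 < g p.1 p.2)
    (hbil₁ : ∀ p ∈ U,
      mixedDeriv g p.1 p.2 * g p.1 p.2 - pdXi g p.1 p.2 * pdEta g p.1 p.2 -
        (f p.1 p.2) ^ 2 + (g p.1 p.2) ^ 2 = 0)
    (hbil₂ : ∀ p ∈ U,
      mixedDeriv f p.1 p.2 * f p.1 p.2 - pdXi f p.1 p.2 * pdEta f p.1 p.2 -
        f p.1 p.2 * g p.1 p.2 + (f p.1 p.2) ^ 2 = 0)
    (φ : ℝ → ℝ → ℝ)
    (hφ : ∀ ξ η : ℝ, φ ξ η = (1 / 2) * Real.log (g ξ η / f ξ η)) :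
    ∀ p ∈ U,
      2 * mixedDeriv φ p.1 p.2 =
        -(Real.exp (2 * φ p.1 p.2) - Real.exp (-4 * φ p.1 p.2)) := by
  rintro ⟨a, b⟩ hp
  obtain ⟨ε, hε, hball⟩ := Metric.isOpen_iff.mp hU (a, b) hp
  have hmem : ∀ x ∈ Metric.ball a ε, ∀ y ∈ Metric.ball b ε, ((x, y) : ℝ × ℝ) ∈ U := by
    intro x hx y hy
    apply hball
    rw [← ball_prod_same]
    exact ⟨hx, hy⟩
  have hgp : 0 < g a b := hgpos (a, b) hp
  have hfp : 0 < f a b := hfpos (a, b) hp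
  -- Step 1: formula for the η-derivative of φ near a
  have step1 : ∀ x ∈ Metric.ball a ε, deriv (fun y => φ x y) b =
      (1 / 2) * (pdEta g x b / g x b - pdEta f x b / f x b) := by
    intro x hx
    have hgx : 0 < g x b := hgpos (x, b) (hmem x hx b (Metric.mem_ball_self hε))
    have hfx : 0 < f x b := hfpos (x, b) (hmem x hx b (Metric.mem_ball_self hε))
    have heq : (fun y => φ x y) =ᶠ[nhds b]
        fun y => (1 / 2) * (Real.log (g x y) - Real.log (f x y)) := by
      filter_upwards [Metric.ball_mem_nhds b hε] with y hy
      rw [hφ, Real.log_div (hgpos (x, y) (hmem x hx y hy)).ne'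
        (hfpos (x, y) (hmem x hx y hy)).ne']
    rw [heq.deriv_eq]
    have hdg : HasDerivAt (fun y => g x y) (pdEta g x b) b :=
      ((aux_diffy g hg x) b).hasDerivAt
    have hdf : HasDerivAt (fun y => f x y) (pdEta f x b) b :=
      ((aux_diffy f hf x) b).hasDerivAt
    exact (((hdg.log hgx.ne').sub (hdf.log hfx.ne')).const_mul (1 / 2)).deriv
  -- Step 2: compute the mixed derivative of φ
  have heq2 : (fun x => deriv (fun y => φ x y) b) =ᶠ[nhds a]
      fun x => (1 / 2) * (pdEta g x b / g x b - pdEta f x b / f x b) := by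
    filter_upwards [Metric.ball_mem_nhds a hε] with x hx using step1 x hx
  have hGg : HasDerivAt (fun x => pdEta g x b) (mixedDeriv g a b) a :=
    ((aux_pdEta_diff g hg b) a).hasDerivAt
  have hGf : HasDerivAt (fun x => pdEta f x b) (mixedDeriv f a b) a :=
    ((aux_pdEta_diff f hf b) a).hasDerivAt
  have hDg : HasDerivAt (fun x => g x b) (pdXi g a b) a :=
    ((aux_diffx g hg b) a).hasDerivAt
  have hDf : HasDerivAt (fun x => f x b) (pdXi f a b) a :=
    ((aux_diffx f hf b) a).hasDerivAt
  have hQ : HasDerivAt (fun x => (1 / 2) * (pdEta g x b / g x b - pdEta f x b / f x b))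
      ((1 / 2) * ((mixedDeriv g a b * g a b - pdEta g a b * pdXi g a b) / (g a b) ^ 2 -
        (mixedDeriv f a b * f a b - pdEta f a b * pdXi f a b) / (f a b) ^ 2)) a :=
    ((hGg.div hDg hgp.ne').sub (hGf.div hDf hfp.ne')).const_mul (1 / 2)
  have hmix : mixedDeriv φ a b =
      (1 / 2) * ((mixedDeriv g a b * g a b - pdEta g a b * pdXi g a b) / (g a b) ^ 2 -
        (mixedDeriv f a b * f a b - pdEta f a b * pdXi f a b) / (f a b) ^ 2) := by
    show deriv (fun x => deriv (fun y => φ x y) b) a = _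
    rw [heq2.deriv_eq]
    exact hQ.deriv
  -- bilinear relations at (a,b)
  have e1 : mixedDeriv g a b * g a b - pdEta g a b * pdXi g a b =
      (f a b) ^ 2 - (g a b) ^ 2 := by
    linear_combination hbil₁ (a, b) hp
  have e2 : mixedDeriv f a b * f a b - pdEta f a b * pdXi f a b =
      f a b * g a b - (f a b) ^ 2 := by
    linear_combination hbil₂ (a, b) hp
  -- exponentials
  have hr : 0 < g a b / f a b := div_pos hgp hfp
  have h2φ : Real.exp (2 * φ a b) = g a b / f a b := by
    rw [hφ]
    have : 2 * ((1 / 2) * Real.log (g a b / f a b)) = Real.log (g a b / f a b) := by ring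
    rw [this, Real.exp_log hr]
  have h4φ : Real.exp (-4 * φ a b) = (f a b) ^ 2 / (g a b) ^ 2 := by
    rw [hφ]
    have h1 : -4 * ((1 / 2) * Real.log (g a b / f a b)) =
        -(Real.log ((g a b / f a b) ^ 2)) := by
      rw [Real.log_pow]; push_cast; ring
    rw [h1, Real.exp_neg, Real.exp_log (pow_pos hr 2), div_pow, inv_div]
  simp only
  rw [hmix, e1, e2, h2φ, h4φ]
  field_simp
  ring
end

section
/- Let k ≠ 0 and A be real numbers and set z(ξ,η) = e^{kξ − (3/k)η}. Then the functions g(ξ,η) = 1 − 2A·z + (A²/4)·z² and f(ξ,η) = 1 + A·z + (A²/4)·z² satisfy the Hirota bilinear system (∂²g/∂ξ∂η)·g − (∂g/∂ξ)(∂g/∂η) − f² + g² = 0 and (∂²f/∂ξ∂η)·f − (∂f/∂ξ)(∂f/∂η) − fg + f² = 0 on all of ℝ². Consequently, wherever g > 0 and f > 0, the function φ = (1/2)·ln(g/f) is a one-soliton solution of the T2 Tzitzeica equation 2 ∂²φ/∂ξ∂η = −(e^{2φ} − e^{−4φ}), with dispersion relation ω = 3/k for z = e^{kξ − ωη}; for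 A = 2 it coincides with the quasi-regular soliton φ = (1/2)·ln[(3/2)·tanh²((kξ − 3η/k)/2) − 1/2]. -/
/-- auxiliary exponential phase -/
noncomputable def EE (k x y : ℝ) : ℝ := Real.exp (k * x - 3 / k * y)

lemma EE_pos (k x y : ℝ) : 0 < EE k x y := Real.exp_pos _

lemma expLin (a b x : ℝ) :
    HasDerivAt (fun t => Real.exp (a * t + b)) (a * Real.exp (a * x + b)) x := by
  have h : HasDerivAt (fun t : ℝ => a * t + b) a x := by
    simpa using ((hasDerivAt_id x).const_mul a).add_const b
  simpa [mul_comm] using h.exp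

lemma EE_x (k x y : ℝ) : HasDerivAt (fun t => EE k t y) (k * EE k x y) x := by
  unfold EE
  simpa [sub_eq_add_neg] using expLin k (-(3 / k * y)) x

lemma EE_y (k x y : ℝ) : HasDerivAt (fun t => EE k x t) (-(3 / k) * EE k x y) y := by
  unfold EE
  have h := expLin (-(3 / k)) (k * x) y
  have hfun : (fun t : ℝ => Real.exp (k * x - 3 / k * t)) =
      fun t => Real.exp (-(3 / k) * t + k * x) := by
    funext t; congr 1; ring
  rw [hfun, show k * x - 3 / k * y = -(3 / k) * y + k * x from by ring]
  exact h

lemma hG_x (k A x y : ℝ) :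
    HasDerivAt (fun t => 1 - 2 * A * EE k t y + A ^ 2 / 4 * EE k t y ^ 2)
      ((-2 * A + A ^ 2 / 2 * EE k x y) * (k * EE k x y)) x := by
  have h := EE_x k x y
  have h2 := ((hasDerivAt_const x (1 : ℝ)).sub (h.const_mul (2 * A))).add
    ((h.pow 2).const_mul (A ^ 2 / 4))
  exact h2.congr_deriv (by push_cast; ring)

lemma hG_y (k A x y : ℝ) :
    HasDerivAt (fun t => 1 - 2 * A * EE k x t + A ^ 2 / 4 * EE k x t ^ 2)
      ((-2 * A + A ^ 2 / 2 * EE k x y) * (-(3 / k) * EE k x y)) y := by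
  have h := EE_y k x y
  have h2 := ((hasDerivAt_const y (1 : ℝ)).sub (h.const_mul (2 * A))).add
    ((h.pow 2).const_mul (A ^ 2 / 4))
  exact h2.congr_deriv (by push_cast; ring)

lemma hF_x (k A x y : ℝ) :
    HasDerivAt (fun t => 1 + A * EE k t y + A ^ 2 / 4 * EE k t y ^ 2)
      ((A + A ^ 2 / 2 * EE k x y) * (k * EE k x y)) x := by
  have h := EE_x k x y
  have h2 := ((hasDerivAt_const x (1 : ℝ)).add (h.const_mul A)).add
    ((h.pow 2).const_mul (A ^ 2 / 4))
  exact h2.congr_deriv (by push_cast; ring)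

lemma hF_y (k A x y : ℝ) :
    HasDerivAt (fun t => 1 + A * EE k x t + A ^ 2 / 4 * EE k x t ^ 2)
      ((A + A ^ 2 / 2 * EE k x y) * (-(3 / k) * EE k x y)) y := by
  have h := EE_y k x y
  have h2 := ((hasDerivAt_const y (1 : ℝ)).add (h.const_mul A)).add
    ((h.pow 2).const_mul (A ^ 2 / 4))
  exact h2.congr_deriv (by push_cast; ring)

lemma hG_xy (k A x y : ℝ) (hk : k ≠ 0) :
    HasDerivAt (fun t => (-2 * A + A ^ 2 / 2 * EE k t y) * (-(3 / k) * EE k t y))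
      (6 * A * EE k x y - 3 * A ^ 2 * EE k x y ^ 2) x := by
  have h := EE_x k x y
  have h2 := ((hasDerivAt_const x (-2 * A)).add (h.const_mul (A ^ 2 / 2))).mul
    (h.const_mul (-(3 / k)))
  exact h2.congr_deriv (by simp only [Pi.add_apply]; field_simp; ring)

lemma hF_xy (k A x y : ℝ) (hk : k ≠ 0) :
    HasDerivAt (fun t => (A + A ^ 2 / 2 * EE k t y) * (-(3 / k) * EE k t y))
      (-(3 * A * EE k x y) - 3 * A ^ 2 * EE k x y ^ 2) x := by
  have h := EE_x k x y
  have h2 := ((hasDerivAt_const x A).add (h.const_mul (A ^ 2 / 2))).mul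
    (h.const_mul (-(3 / k)))
  exact h2.congr_deriv (by simp only [Pi.add_apply]; field_simp; ring)

set_option maxHeartbeats 2000000 in
/-- With `z = e^{kξ - (3/k)η}` (dispersion relation `ω = 3/k`), the tau functions
`g = 1 - 2Az + (A²/4)z²` and `f = 1 + Az + (A²/4)z²` satisfy the Hirota bilinear
system of the T2 Tzitzeica equation on all of ℝ²; consequently wherever
`g > 0` and `f > 0`, `φ = (1/2)·ln(g/f)` satisfies T2:
`2 φ_{ξη} = -(e^{2φ} - e^{-4φ})`; and for `A = 2` this `φ` coincides with the
quasi-regular soliton `(1/2)·ln[(3/2)·tanh²((kξ - 3η/k)/2) - 1/2]`. -/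
theorem stmt_19 (k A : ℝ) (hk : k ≠ 0)
    (z g f : ℝ → ℝ → ℝ)
    (hz : ∀ ξ η : ℝ, z ξ η = Real.exp (k * ξ - (3 / k) * η))
    (hg : ∀ ξ η : ℝ, g ξ η = 1 - 2 * A * z ξ η + (A ^ 2 / 4) * (z ξ η) ^ 2)
    (hf : ∀ ξ η : ℝ, f ξ η = 1 + A * z ξ η + (A ^ 2 / 4) * (z ξ η) ^ 2)
    (φ : ℝ → ℝ → ℝ)
    (hφ : ∀ ξ η : ℝ, φ ξ η = (1 / 2) * Real.log (g ξ η / f ξ η)) :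
    (∀ ξ η : ℝ,
      mixedDeriv g ξ η * g ξ η - pdXi g ξ η * pdEta g ξ η -
        (f ξ η) ^ 2 + (g ξ η) ^ 2 = 0 ∧
      mixedDeriv f ξ η * f ξ η - pdXi f ξ η * pdEta f ξ η -
        f ξ η * g ξ η + (f ξ η) ^ 2 = 0) ∧
    (∀ ξ η : ℝ, 0 < g ξ η → 0 < f ξ η →
      2 * mixedDeriv φ ξ η = -(Real.exp (2 * φ ξ η) - Real.exp (-4 * φ ξ η))) ∧
    (A = 2 → ∀ ξ η : ℝ,
      φ ξ η = (1 / 2) *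
        Real.log ((3 / 2) * Real.tanh ((k * ξ - 3 * η / k) / 2) ^ 2 - 1 / 2)) := by
  have hgfun : ∀ y : ℝ, (fun t => g t y) =
      (fun t => 1 - 2 * A * EE k t y + A ^ 2 / 4 * EE k t y ^ 2) := fun y =>
    funext fun t => by rw [hg, hz]; rfl
  have hgfun2 : ∀ x : ℝ, (fun t => g x t) =
      (fun t => 1 - 2 * A * EE k x t + A ^ 2 / 4 * EE k x t ^ 2) := fun x =>
    funext fun t => by rw [hg, hz]; rfl
  have hffun : ∀ y : ℝ, (fun t => f t y) =
      (fun t => 1 + A * EE k t y + A ^ 2 / 4 * EE k t y ^ 2) := fun y =>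
    funext fun t => by rw [hf, hz]; rfl
  have hffun2 : ∀ x : ℝ, (fun t => f x t) =
      (fun t => 1 + A * EE k x t + A ^ 2 / 4 * EE k x t ^ 2) := fun x =>
    funext fun t => by rw [hf, hz]; rfl
  -- pointwise derivative values
  have epdXiG : ∀ ξ η : ℝ, pdXi g ξ η =
      (-2 * A + A ^ 2 / 2 * EE k ξ η) * (k * EE k ξ η) := by
    intro ξ η
    simp only [pdXi]
    rw [hgfun η]
    exact (hG_x k A ξ η).deriv
  have epdEtaG : ∀ ξ η : ℝ, pdEta g ξ η =
      (-2 * A + A ^ 2 / 2 * EE k ξ η) * (-(3 / k) * EE k ξ η) := by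
    intro ξ η
    simp only [pdEta]
    rw [hgfun2 ξ]
    exact (hG_y k A ξ η).deriv
  have emixG : ∀ ξ η : ℝ, mixedDeriv g ξ η =
      6 * A * EE k ξ η - 3 * A ^ 2 * EE k ξ η ^ 2 := by
    intro ξ η
    simp only [mixedDeriv]
    have einner : (fun x => deriv (fun y => g x y) η) =
        (fun x => (-2 * A + A ^ 2 / 2 * EE k x η) * (-(3 / k) * EE k x η)) :=
      funext fun x => by rw [hgfun2 x]; exact (hG_y k A x η).deriv
    rw [einner]
    exact (hG_xy k A ξ η hk).deriv
  have epdXiF : ∀ ξ η : ℝ, pdXi f ξ η =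
      (A + A ^ 2 / 2 * EE k ξ η) * (k * EE k ξ η) := by
    intro ξ η
    simp only [pdXi]
    rw [hffun η]
    exact (hF_x k A ξ η).deriv
  have epdEtaF : ∀ ξ η : ℝ, pdEta f ξ η =
      (A + A ^ 2 / 2 * EE k ξ η) * (-(3 / k) * EE k ξ η) := by
    intro ξ η
    simp only [pdEta]
    rw [hffun2 ξ]
    exact (hF_y k A ξ η).deriv
  have emixF : ∀ ξ η : ℝ, mixedDeriv f ξ η =
      -(3 * A * EE k ξ η) - 3 * A ^ 2 * EE k ξ η ^ 2 := by
    intro ξ η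
    simp only [mixedDeriv]
    have einner : (fun x => deriv (fun y => f x y) η) =
        (fun x => (A + A ^ 2 / 2 * EE k x η) * (-(3 / k) * EE k x η)) :=
      funext fun x => by rw [hffun2 x]; exact (hF_y k A x η).deriv
    rw [einner]
    exact (hF_xy k A ξ η hk).deriv
  have hgval : ∀ ξ η : ℝ, g ξ η = 1 - 2 * A * EE k ξ η + A ^ 2 / 4 * EE k ξ η ^ 2 :=
    fun ξ η => by rw [hg, hz]; rfl
  have hfval : ∀ ξ η : ℝ, f ξ η = 1 + A * EE k ξ η + A ^ 2 / 4 * EE k ξ η ^ 2 :=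
    fun ξ η => by rw [hf, hz]; rfl
  refine ⟨?_, ?_, ?_⟩
  · -- bilinear system
    intro ξ η
    constructor
    · rw [emixG, epdXiG, epdEtaG, hgval, hfval]
      field_simp
      ring
    · rw [emixF, epdXiF, epdEtaF, hgval, hfval]
      field_simp
      ring
  · -- the T2 equation
    intro ξ η hgpos hfpos
    have hGpos : 0 < 1 - 2 * A * EE k ξ η + A ^ 2 / 4 * EE k ξ η ^ 2 := by
      rw [← hgval]; exact hgpos
    have hFpos : 0 < 1 + A * EE k ξ η + A ^ 2 / 4 * EE k ξ η ^ 2 := by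
      rw [← hfval]; exact hfpos
    have hGne := ne_of_gt hGpos
    have hFne := ne_of_gt hFpos
    -- eventual positivity
    have hcontG : Continuous (fun x => 1 - 2 * A * EE k x η + A ^ 2 / 4 * EE k x η ^ 2) := by
      unfold EE; fun_prop
    have hcontF : Continuous (fun x => 1 + A * EE k x η + A ^ 2 / 4 * EE k x η ^ 2) := by
      unfold EE; fun_prop
    have hevG : ∀ᶠ x in nhds ξ, 0 < 1 - 2 * A * EE k x η + A ^ 2 / 4 * EE k x η ^ 2 :=
      hcontG.continuousAt.eventually (eventually_gt_nhds hGpos)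
    have hevF : ∀ᶠ x in nhds ξ, 0 < 1 + A * EE k x η + A ^ 2 / 4 * EE k x η ^ 2 :=
      hcontF.continuousAt.eventually (eventually_gt_nhds hFpos)
    -- the explicit formula for ∂φ/∂η, valid near ξ
    have hev : (fun x => deriv (fun y => φ x y) η) =ᶠ[nhds ξ]
        (fun x => 1 / 2 *
          ((-2 * A + A ^ 2 / 2 * EE k x η) * (-(3 / k) * EE k x η) /
              (1 - 2 * A * EE k x η + A ^ 2 / 4 * EE k x η ^ 2) -
            (A + A ^ 2 / 2 * EE k x η) * (-(3 / k) * EE k x η) /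
              (1 + A * EE k x η + A ^ 2 / 4 * EE k x η ^ 2))) := by
      filter_upwards [hevG, hevF] with x hGx hFx
      have hφfun : (fun t => φ x t) = (fun t => 1 / 2 * Real.log
          ((1 - 2 * A * EE k x t + A ^ 2 / 4 * EE k x t ^ 2) /
            (1 + A * EE k x t + A ^ 2 / 4 * EE k x t ^ 2))) :=
        funext fun t => by rw [hφ, hg, hf, hz]; rfl
      have hd : HasDerivAt (fun t => φ x t)
          (1 / 2 * (((-2 * A + A ^ 2 / 2 * EE k x η) * (-(3 / k) * EE k x η) *
              (1 + A * EE k x η + A ^ 2 / 4 * EE k x η ^ 2) -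
            (1 - 2 * A * EE k x η + A ^ 2 / 4 * EE k x η ^ 2) *
              ((A + A ^ 2 / 2 * EE k x η) * (-(3 / k) * EE k x η))) /
            (1 + A * EE k x η + A ^ 2 / 4 * EE k x η ^ 2) ^ 2 /
            ((1 - 2 * A * EE k x η + A ^ 2 / 4 * EE k x η ^ 2) /
              (1 + A * EE k x η + A ^ 2 / 4 * EE k x η ^ 2)))) η := by
        rw [hφfun]
        exact (((hG_y k A x η).div (hF_y k A x η) (ne_of_gt hFx)).log
          (div_ne_zero (ne_of_gt hGx) (ne_of_gt hFx))).const_mul (1 / 2)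
      rw [hd.deriv]
      have h1 := ne_of_gt hGx
      have h2 := ne_of_gt hFx
      set G := 1 - 2 * A * EE k x η + A ^ 2 / 4 * EE k x η ^ 2 with hGdef
      set F := 1 + A * EE k x η + A ^ 2 / 4 * EE k x η ^ 2 with hFdef
      field_simp
    -- differentiate the formula in ξ
    have hD : HasDerivAt (fun x => 1 / 2 *
          ((-2 * A + A ^ 2 / 2 * EE k x η) * (-(3 / k) * EE k x η) /
              (1 - 2 * A * EE k x η + A ^ 2 / 4 * EE k x η ^ 2) -
            (A + A ^ 2 / 2 * EE k x η) * (-(3 / k) * EE k x η) /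
              (1 + A * EE k x η + A ^ 2 / 4 * EE k x η ^ 2)))
        (1 / 2 * (((6 * A * EE k ξ η - 3 * A ^ 2 * EE k ξ η ^ 2) *
              (1 - 2 * A * EE k ξ η + A ^ 2 / 4 * EE k ξ η ^ 2) -
            (-2 * A + A ^ 2 / 2 * EE k ξ η) * (-(3 / k) * EE k ξ η) *
              ((-2 * A + A ^ 2 / 2 * EE k ξ η) * (k * EE k ξ η))) /
            (1 - 2 * A * EE k ξ η + A ^ 2 / 4 * EE k ξ η ^ 2) ^ 2 -
          ((-(3 * A * EE k ξ η) - 3 * A ^ 2 * EE k ξ η ^ 2) *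
              (1 + A * EE k ξ η + A ^ 2 / 4 * EE k ξ η ^ 2) -
            (A + A ^ 2 / 2 * EE k ξ η) * (-(3 / k) * EE k ξ η) *
              ((A + A ^ 2 / 2 * EE k ξ η) * (k * EE k ξ η))) /
            (1 + A * EE k ξ η + A ^ 2 / 4 * EE k ξ η ^ 2) ^ 2)) ξ :=
      (((hG_xy k A ξ η hk).div (hG_x k A ξ η) hGne).sub
        ((hF_xy k A ξ η hk).div (hF_x k A ξ η) hFne)).const_mul (1 / 2)
    have hmix : mixedDeriv φ ξ η = 1 / 2 * (((6 * A * EE k ξ η - 3 * A ^ 2 * EE k ξ η ^ 2) *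
              (1 - 2 * A * EE k ξ η + A ^ 2 / 4 * EE k ξ η ^ 2) -
            (-2 * A + A ^ 2 / 2 * EE k ξ η) * (-(3 / k) * EE k ξ η) *
              ((-2 * A + A ^ 2 / 2 * EE k ξ η) * (k * EE k ξ η))) /
            (1 - 2 * A * EE k ξ η + A ^ 2 / 4 * EE k ξ η ^ 2) ^ 2 -
          ((-(3 * A * EE k ξ η) - 3 * A ^ 2 * EE k ξ η ^ 2) *
              (1 + A * EE k ξ η + A ^ 2 / 4 * EE k ξ η ^ 2) -
            (A + A ^ 2 / 2 * EE k ξ η) * (-(3 / k) * EE k ξ η) *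
              ((A + A ^ 2 / 2 * EE k ξ η) * (k * EE k ξ η))) /
            (1 + A * EE k ξ η + A ^ 2 / 4 * EE k ξ η ^ 2) ^ 2) := by
      simp only [mixedDeriv]
      exact (hD.congr_of_eventuallyEq hev).deriv
    have hφval : φ ξ η = 1 / 2 * Real.log
        ((1 - 2 * A * EE k ξ η + A ^ 2 / 4 * EE k ξ η ^ 2) /
          (1 + A * EE k ξ η + A ^ 2 / 4 * EE k ξ η ^ 2)) := by
      rw [hφ, hg, hf, hz]; rfl
    have e2 : Real.exp (2 * φ ξ η) =
        (1 - 2 * A * EE k ξ η + A ^ 2 / 4 * EE k ξ η ^ 2) /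
          (1 + A * EE k ξ η + A ^ 2 / 4 * EE k ξ η ^ 2) := by
      rw [hφval, show 2 * (1 / 2 * Real.log
        ((1 - 2 * A * EE k ξ η + A ^ 2 / 4 * EE k ξ η ^ 2) /
          (1 + A * EE k ξ η + A ^ 2 / 4 * EE k ξ η ^ 2))) = Real.log
        ((1 - 2 * A * EE k ξ η + A ^ 2 / 4 * EE k ξ η ^ 2) /
          (1 + A * EE k ξ η + A ^ 2 / 4 * EE k ξ η ^ 2)) by ring]
      exact Real.exp_log (div_pos hGpos hFpos)
    have e4 : Real.exp (-4 * φ ξ η) =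
        ((1 + A * EE k ξ η + A ^ 2 / 4 * EE k ξ η ^ 2) /
          (1 - 2 * A * EE k ξ η + A ^ 2 / 4 * EE k ξ η ^ 2)) ^ 2 := by
      rw [hφval]
      rw [show -4 * (1 / 2 * Real.log
        ((1 - 2 * A * EE k ξ η + A ^ 2 / 4 * EE k ξ η ^ 2) /
          (1 + A * EE k ξ η + A ^ 2 / 4 * EE k ξ η ^ 2))) = Real.log
        (((1 - 2 * A * EE k ξ η + A ^ 2 / 4 * EE k ξ η ^ 2) /
          (1 + A * EE k ξ η + A ^ 2 / 4 * EE k ξ η ^ 2))⁻¹) + Real.log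
        (((1 - 2 * A * EE k ξ η + A ^ 2 / 4 * EE k ξ η ^ 2) /
          (1 + A * EE k ξ η + A ^ 2 / 4 * EE k ξ η ^ 2))⁻¹) by
          rw [Real.log_inv]; ring]
      rw [Real.exp_add, Real.exp_log (inv_pos.mpr (div_pos hGpos hFpos)), inv_div]
      ring
    have key1 : (6 * A * EE k ξ η - 3 * A ^ 2 * EE k ξ η ^ 2) *
          (1 - 2 * A * EE k ξ η + A ^ 2 / 4 * EE k ξ η ^ 2) -
        (-2 * A + A ^ 2 / 2 * EE k ξ η) * (-(3 / k) * EE k ξ η) *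
          ((-2 * A + A ^ 2 / 2 * EE k ξ η) * (k * EE k ξ η)) =
        (1 + A * EE k ξ η + A ^ 2 / 4 * EE k ξ η ^ 2) ^ 2 -
        (1 - 2 * A * EE k ξ η + A ^ 2 / 4 * EE k ξ η ^ 2) ^ 2 := by
      field_simp
      ring
    have key2 : (-(3 * A * EE k ξ η) - 3 * A ^ 2 * EE k ξ η ^ 2) *
          (1 + A * EE k ξ η + A ^ 2 / 4 * EE k ξ η ^ 2) -
        (A + A ^ 2 / 2 * EE k ξ η) * (-(3 / k) * EE k ξ η) *
          ((A + A ^ 2 / 2 * EE k ξ η) * (k * EE k ξ η)) =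
        (1 + A * EE k ξ η + A ^ 2 / 4 * EE k ξ η ^ 2) *
          (1 - 2 * A * EE k ξ η + A ^ 2 / 4 * EE k ξ η ^ 2) -
        (1 + A * EE k ξ η + A ^ 2 / 4 * EE k ξ η ^ 2) ^ 2 := by
      field_simp
      ring
    rw [key1, key2] at hmix
    rw [hmix, e2, e4]
    obtain ⟨G, hGdef⟩ : ∃ v, (1 - 2 * A * EE k ξ η + A ^ 2 / 4 * EE k ξ η ^ 2) = v := ⟨_, rfl⟩
    obtain ⟨F, hFdef⟩ : ∃ v, (1 + A * EE k ξ η + A ^ 2 / 4 * EE k ξ η ^ 2) = v := ⟨_, rfl⟩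
    rw [hGdef] at hGne ⊢
    rw [hFdef] at hFne ⊢
    field_simp
    ring
  · -- A = 2 quasi-regular soliton
    intro hA ξ η
    subst hA
    rw [hφ, hg, hf, hz]
    congr 1
    have harg : (k * ξ - 3 * η / k) / 2 = (k * ξ - 3 / k * η) / 2 := by ring
    rw [harg, Real.tanh_eq_sinh_div_cosh, Real.sinh_eq, Real.cosh_eq, Real.exp_neg]
    have hs : Real.exp (k * ξ - 3 / k * η) =
        Real.exp ((k * ξ - 3 / k * η) / 2) * Real.exp ((k * ξ - 3 / k * η) / 2) := by
      rw [← Real.exp_add]; ring_nf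
    rw [hs]
    set s := Real.exp ((k * ξ - 3 / k * η) / 2) with hsdef
    have hspos : 0 < s := Real.exp_pos _
    have hsne : s ≠ 0 := ne_of_gt hspos
    have hsum : s + s⁻¹ ≠ 0 := ne_of_gt (add_pos hspos (inv_pos.mpr hspos))
    have hden : (0:ℝ) < 1 + 2 * (s * s) + 2 ^ 2 / 4 * (s * s) ^ 2 := by positivity
    have hden' := hden.ne'
    congr 1
    field_simp
    ring
end
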